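/- arXiv:2408.12265 — 4 statements merged into one kernel-verified Lean document; each statement's English description precedes it below -/
import Mathlib

section
/- (i) For every nonzero tensor T ∈ ℂ²⊗ℂ²⊗ℂ²⊗ℂ² (a four-qubit state), the maximum of the three two-multirank entries r_{{1,2}}(T), r_{{1,3}}(T), r_{{1,4}}(T) — the ranks of the three 4×4 flattenings corresponding to the bipartitions 12|34, 13|24, 14|23 — is attained at least twice. (ii) Conversely, a triple (a,b,c) of integers with 1 ≤ a,b,c ≤ 4 arises as (r_{{1,2}}(T), r_{{1,3}}(T), r_{{1,4}}(T)) for some nonzero T ∈ (ℂ²)^{⊗4} if and only if its maximum is attained at least twice and (a,b,c) is not a permutation of (1,3,3). -/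
namespace QIT

noncomputable section

/-- The coordinate description of the rank-one (simple) tensor
`v 1 ⊗ ⋯ ⊗ v n` with local factors `v i : ℂ^{α i}`.  Throughout, a tensor in
`ℂ^{α 1} ⊗ ⋯ ⊗ ℂ^{α n}` (each local space `ℂ^{α i}` being the space `α i → ℂ`
with its standard basis) is identified with its coefficient array, a function
`(∀ i, α i) → ℂ` on multi-indices. -/
def prodTensor {ι : Type} [Fintype ι] {α : ι → Type} (v : ∀ i, α i → ℂ) :
    (∀ i, α i) → ℂ :=
  fun j => ∏ i, v i (j i)

/-- `T` has tensor rank at most `r`: it is a sum of `r` simple tensors. -/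
def HasRankLE {ι : Type} [Fintype ι] {α : ι → Type} (T : (∀ i, α i) → ℂ) (r : ℕ) : Prop :=
  ∃ v : Fin r → ∀ i, α i → ℂ, T = ∑ p, prodTensor (v p)

/-- The tensor rank of `T`. -/
def tensorRank {ι : Type} [Fintype ι] {α : ι → Type} (T : (∀ i, α i) → ℂ) : ℕ :=
  sInf {r | HasRankLE T r}

/-- The border rank of `T`: the smallest `r` such that `T` is a limit of tensors
of rank at most `r`. -/
def borderRank {ι : Type} [Fintype ι] {α : ι → Type} (T : (∀ i, α i) → ℂ) : ℕ :=
  sInf {r | T ∈ closure {S : (∀ i, α i) → ℂ | HasRankLE S r}}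

/-- The slice of `T` in the `i`-th factor determined by the multi-index `m`
(the value of `m` at `i` is irrelevant). -/
def sliceAt {ι : Type} [DecidableEq ι] {α : ι → Type} (T : (∀ i, α i) → ℂ) (i : ι)
    (m : ∀ j, α j) : α i → ℂ :=
  fun k => T (Function.update m i k)

/-- `T ∈ V' ⊗ (⊗_{j ≠ i} V_j)` in the `i`-th factor: all `i`-th slices of `T`
lie in the subspace `V'`. -/
def FactorIn {ι : Type} [DecidableEq ι] {α : ι → Type} (T : (∀ i, α i) → ℂ) (i : ι)
    (V' : Submodule ℂ (α i → ℂ)) : Prop :=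
  ∀ m : ∀ j, α j, sliceAt T i m ∈ V'

/-- `T` is concise in the `i`-th factor: `T ∉ V' ⊗ (⊗_{j ≠ i} V_j)` for every
proper subspace `V' ⊊ V_i`. -/
def Concise {ι : Type} [DecidableEq ι] {α : ι → Type} (T : (∀ i, α i) → ℂ) (i : ι) : Prop :=
  ∀ V' : Submodule ℂ (α i → ℂ), FactorIn T i V' → V' = ⊤

/-- Contraction `⟨f|T` of the first factor of `T` with a covector `f`. -/
def contractFirst {n : ℕ} {α : Fin (n + 1) → Type} (f : (α 0 → ℂ) →ₗ[ℂ] ℂ)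
    (T : (∀ i, α i) → ℂ) : (∀ i : Fin n, α i.succ) → ℂ :=
  fun m => f (fun k => T (Fin.cons k m))

/-- Persistent tensors, defined inductively: a bipartite tensor is persistent
iff it is `1`-concise; an `n`-partite tensor (`n > 2`) is persistent iff it is
`1`-concise and there is a proper subspace `S ⊊ V₁^∨` such that `⟨f|T` is
persistent whenever `f ∉ S`. -/
def Persistent : {n : ℕ} → {α : Fin n → Type} → ((∀ i, α i) → ℂ) → Prop
  | 0, _, _ => False
  | 1, _, _ => False
  | 2, _, T => Concise T 0
  | (n + 3), α, T =>
      Concise T 0 ∧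
      ∃ S : Submodule ℂ ((α 0 → ℂ) →ₗ[ℂ] ℂ), S ≠ ⊤ ∧
        ∀ f : (α 0 → ℂ) →ₗ[ℂ] ℂ, f ∉ S → Persistent (contractFirst f T)

/-- Apply the linear maps with matrices `A i` to the factors of `T`
(the coordinate form of `(A 1 ⊗ ⋯ ⊗ A n) T`). -/
def applyLin {ι : Type} [Fintype ι] [DecidableEq ι] {α β : ι → Type} [∀ i, Fintype (α i)]
    (A : ∀ i, β i → α i → ℂ) (T : (∀ i, α i) → ℂ) : (∀ i, β i) → ℂ :=
  fun j => ∑ m : ∀ i, α i, (∏ i, A i (j i) (m i)) * T m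

/-- `T` can be transformed into `S` via SLOCC. -/
def SLOCCto {ι : Type} [Fintype ι] [DecidableEq ι] {α β : ι → Type} [∀ i, Fintype (α i)]
    (T : (∀ i, α i) → ℂ) (S : (∀ i, β i) → ℂ) : Prop :=
  ∃ A : ∀ i, β i → α i → ℂ, applyLin A T = S

/-- `T` degenerates into `S` via SLOCC: there are local maps `A i (ε)` with
entries polynomial in `ε` and an approximation degree `e` with
`lim_{ε → 0} ε⁻ᵉ (A 1 (ε) ⊗ ⋯ ⊗ A n (ε)) T = S`. -/
def Degenerates {ι : Type} [Fintype ι] [DecidableEq ι] {α β : ι → Type} [∀ i, Fintype (α i)]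
    (T : (∀ i, α i) → ℂ) (S : (∀ i, β i) → ℂ) : Prop :=
  ∃ (A : ∀ i, β i → α i → Polynomial ℂ) (e : ℕ),
    Filter.Tendsto
      (fun ε : ℂ => (ε ^ e)⁻¹ • applyLin (fun i r c => (A i r c).eval ε) T)
      (nhdsWithin 0 {0}ᶜ) (nhds S)

/-- The rank of the flattening of `T` across the bipartition `I | Iᶜ`. -/
def flatRank {ι : Type} [Fintype ι] [DecidableEq ι] {α : ι → Type}
    [∀ i, Fintype (α i)] (T : (∀ i, α i) → ℂ) (I : Finset ι) : ℕ :=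
  Matrix.rank (Matrix.of fun (a : ∀ i : {x // x ∈ I}, α i.1) (b : ∀ i : {x // x ∉ I}, α i.1) =>
    T fun i => if h : i ∈ I then a ⟨i, h⟩ else b ⟨i, h⟩)

/-- The direct sum `T ⊕ S` of two `n`-partite tensors, a tensor with `i`-th
local space `U_i ⊕ V_i`. -/
def directSum {ι : Type} [Fintype ι] {α β : ι → Type}
    (T : (∀ i, α i) → ℂ) (S : (∀ i, β i) → ℂ) : (∀ i, α i ⊕ β i) → ℂ :=
  fun j =>
    if h : ∀ i, (j i).isLeft then T (fun i => (j i).getLeft (h i))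
    else if h' : ∀ i, (j i).isRight then S (fun i => (j i).getRight (h' i))
    else 0

/-- The Kronecker product `T ⊠ S` of two `n`-partite tensors, an `n`-partite
tensor with `i`-th local space `U_i ⊗ V_i`. -/
def kron {ι : Type} {α β : ι → Type} (T : (∀ i, α i) → ℂ) (S : (∀ i, β i) → ℂ) :
    (∀ i, α i × β i) → ℂ :=
  fun j => T (fun i => (j i).1) * S (fun i => (j i).2)

/-- The outer (tensor) product `T ⊗ S` of an `n`-partite and an `m`-partite
tensor, regarded as an `(n+m)`-partite tensor. -/
def outer {ι κ : Type} {α : ι → Type} {β : κ → Type}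
    (T : (∀ i, α i) → ℂ) (S : (∀ k, β k) → ℂ) :
    (∀ x : ι ⊕ κ, Sum.elim α β x) → ℂ :=
  fun j => T (fun i => j (Sum.inl i)) * S (fun k => j (Sum.inr k))

/-- The `m`-fold Kronecker power `T^{⊠ m}` of an `n`-partite tensor with all
local spaces `ℂ^d`: an `n`-partite tensor with local spaces `(ℂ^d)^{⊗ m}`. -/
def kpow (d n : ℕ) (T : (Fin n → Fin d) → ℂ) (m : ℕ) :
    (Fin n → (Fin m → Fin d)) → ℂ :=
  fun j => ∏ t : Fin m, T (fun i => j i t)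

/-- The `n`-qubit W state `W_n = Σ_{i} |0⟩^{⊗(n-i-1)} ⊗ |1⟩ ⊗ |0⟩^{⊗ i}`:
its coefficient on a multi-index is `1` iff exactly one entry is `1`. -/
def Wstate (n : ℕ) : (Fin n → Fin 2) → ℂ :=
  fun m => if (∑ i, (m i : ℕ)) = 1 then 1 else 0

/-- The `n`-qudit GHZ state `G(d,n) = Σ_{j=0}^{d-1} |j⟩^{⊗ n}`. -/
def Gstate (d n : ℕ) : (Fin n → Fin d) → ℂ :=
  fun m => if ∃ j : Fin d, ∀ i, m i = j then 1 else 0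

/-- The `n`-qudit L state `L(d,n) = Σ_{j₁+⋯+jₙ = d-1} |j₁ ⋯ jₙ⟩`. -/
def Lstate (d n : ℕ) : (Fin n → Fin d) → ℂ :=
  fun m => if (∑ i, (m i : ℕ)) = d - 1 then 1 else 0

/-- The `n`-qudit M state
`M(d,n) = Σᵢ |0⟩^{⊗(n-i-1)} |d-1⟩ |0⟩^{⊗ i}
  + Σ_{i+k+l=n-2} Σ_{j=1}^{d-2} |0⟩^{⊗i} |j⟩ |0⟩^{⊗k} |d-j-1⟩ |0⟩^{⊗l}`:
its coefficient on a multi-index is `1` iff the entries sum to `d-1` and at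
most two entries are nonzero. -/
def Mstate (d n : ℕ) : (Fin n → Fin d) → ℂ :=
  fun m =>
    if (∑ i, (m i : ℕ)) = d - 1 ∧
        (Finset.univ.filter fun i => (m i : ℕ) ≠ 0).card ≤ 2 then 1 else 0

/-- The `n`-qudit N state
`N(d,n) = |0⟩^{⊗(n-1)} |d-1⟩ + Σ_{i=0}^{n-2} Σ_{j=1}^{d-1} |0⟩^{⊗(n-i-2)} |j⟩ |0⟩^{⊗i} |d-j-1⟩`:
its coefficient on a multi-index is `1` iff the entries sum to `d-1` and at
most one of the first `n-1` entries is nonzero. -/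
def Nstate (d n : ℕ) : (Fin n → Fin d) → ℂ :=
  fun m =>
    if (∑ i, (m i : ℕ)) = d - 1 ∧
        (Finset.univ.filter fun i : Fin n => (i : ℕ) + 1 < n ∧ (m i : ℕ) ≠ 0).card ≤ 1
    then 1 else 0

/-- Apply a linear endomorphism `π` of the `i`-th local space to the `i`-th
factor of `T`, i.e. `(id^{⊗(i-1)} ⊗ π ⊗ id^{⊗(n-i)}) T`. -/
def applyAtFactor {ι : Type} [DecidableEq ι] {α : ι → Type}
    (T : (∀ i, α i) → ℂ) (i : ι) (π : (α i → ℂ) →ₗ[ℂ] (α i → ℂ)) :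
    (∀ j, α j) → ℂ :=
  fun j => π (sliceAt T i j) (j i)

end

/-- The entries `(r_{12}(T), r_{13}(T), r_{14}(T))` of the two-multirank of a
four-qubit tensor: ranks of the three `4×4` flattenings across the
bipartitions `12|34`, `13|24`, `14|23`. -/
noncomputable def rk2 (I : Finset (Fin 4)) (T : (Fin 4 → Fin 2) → ℂ) : ℕ := flatRank T I

/-- The maximum of `a`, `b`, `c` is attained at least twice. -/
def MaxAttainedTwice (a b c : ℕ) : Prop :=
  (a = max a (max b c) ∧ b = max a (max b c)) ∨
  (a = max a (max b c) ∧ c = max a (max b c)) ∨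
  (b = max a (max b c) ∧ c = max a (max b c))

/-- `(a, b, c)` is a permutation of `(1, 3, 3)`. -/
def IsPerm133 (a b c : ℕ) : Prop :=
  (a = 1 ∧ b = 3 ∧ c = 3) ∨ (a = 3 ∧ b = 1 ∧ c = 3) ∨ (a = 3 ∧ b = 3 ∧ c = 1)

section Aux
open Matrix
set_option linter.unusedSectionVars false
set_option linter.unusedVariables false
set_option maxHeartbeats 4000000
set_option maxRecDepth 100000


def d1 : Fin 4 → Fin 2 := ![0, 0, 1, 1]
def d2 : Fin 4 → Fin 2 := ![0, 1, 0, 1]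

noncomputable def matA (t : Fin 2 → Fin 2 → Fin 2 → Fin 2 → ℂ) : Matrix (Fin 4) (Fin 4) ℂ :=
  Matrix.of fun r c => t (d1 r) (d2 r) (d1 c) (d2 c)

def sw23 (t : Fin 2 → Fin 2 → Fin 2 → Fin 2 → ℂ) : Fin 2 → Fin 2 → Fin 2 → Fin 2 → ℂ :=
  fun i j k l => t i k j l
def sw24 (t : Fin 2 → Fin 2 → Fin 2 → Fin 2 → ℂ) : Fin 2 → Fin 2 → Fin 2 → Fin 2 → ℂ :=
  fun i j k l => t i l k j
def swc (t : Fin 2 → Fin 2 → Fin 2 → Fin 2 → ℂ) : Fin 2 → Fin 2 → Fin 2 → Fin 2 → ℂ :=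
  fun i j k l => t i j l k

lemma rank_submatrix_le' {m n m' n' : Type} [Fintype m] [Fintype n] [Fintype m'] [Fintype n']
    [DecidableEq m] [DecidableEq n] (A : Matrix m n ℂ) (f : m' → m) (g : n' → n) :
    (A.submatrix f g).rank ≤ A.rank := by
  rw [show A.submatrix f g = ((1 : Matrix m m ℂ).submatrix f id) * A * ((1 : Matrix n n ℂ).submatrix id g) by
    ext i j; simp [Matrix.mul_apply, Matrix.one_apply, Finset.sum_ite_eq, Finset.sum_ite_eq']]
  exact le_trans (Matrix.rank_mul_le _ _) (le_trans (min_le_left _ _) (Matrix.rank_mul_le_right _ _))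

attribute [-simp] Matrix.submatrix_cons_row

attribute [simp] Matrix.cons_val_two Matrix.cons_val_three

lemma exists_independent_cols {m n : Type} [Fintype m] [Fintype n] [DecidableEq m] [DecidableEq n]
    (A : Matrix m n ℂ) (k : ℕ) (h : k ≤ A.rank) :
    ∃ g : Fin k → n, LinearIndependent ℂ (fun s => Aᵀ (g s)) := by
  rw [Matrix.rank_eq_finrank_span_cols] at h
  obtain ⟨b, hbsub, hbspan, hbind⟩ := exists_linearIndependent ℂ (Set.range Aᵀ)
  have hfin : b.Finite := (Set.finite_range Aᵀ).subset hbsub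
  haveI := hfin.fintype
  have hcard : Fintype.card b = Module.finrank ℂ (Submodule.span ℂ b) := by
    have := linearIndependent_iff_card_eq_finrank_span.mp hbind
    rwa [Subtype.range_coe] at this
  have hk : k ≤ Fintype.card b := by rw [hcard, hbspan]; exact h
  let emb : Fin k → b := fun s => (Fintype.equivFin b).symm (Fin.castLE hk s)
  have hembinj : Function.Injective emb :=
    (Fintype.equivFin b).symm.injective.comp (Fin.castLE_injective hk)
  have hchoose : ∀ s : Fin k, ∃ j : n, Aᵀ j = (emb s).val := fun s => hbsub (emb s).2
  choose g hg using hchoose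
  refine ⟨g, ?_⟩
  have heq : (fun s => Aᵀ (g s)) = (fun x : b => x.val) ∘ emb := by
    funext s; simp [hg]
  rw [heq]
  exact hbind.comp emb hembinj

lemma exists_submatrix_det_ne_zero {m n : Type} [Fintype m] [Fintype n] [DecidableEq m] [DecidableEq n]
    (A : Matrix m n ℂ) (k : ℕ) (h : k ≤ A.rank) :
    ∃ (f : Fin k → m) (g : Fin k → n), (A.submatrix f g).det ≠ 0 := by
  obtain ⟨g, hg⟩ := exists_independent_cols A k h
  set N : Matrix (Fin k) m ℂ := Aᵀ.submatrix g id with hN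
  have h2 : N.rank = k := by
    have : LinearIndependent ℂ (fun s => N s) := hg
    simpa using this.rank_matrix (M := N)
  obtain ⟨f, hf⟩ := exists_independent_cols N k h2.ge
  refine ⟨f, g, ?_⟩
  have hrows : LinearIndependent ℂ (fun s => (A.submatrix f g) s) := by
    have heq : (fun s => (A.submatrix f g) s) = (fun s => Nᵀ (f s)) := by
      funext s; funext c; simp [hN]
    rw [heq]; exact hf
  have hu := Matrix.linearIndependent_rows_iff_isUnit.mp hrows
  exact isUnit_iff_ne_zero.mp ((Matrix.isUnit_iff_isUnit_det _).mp hu)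

lemma minors_zero_of_rank_lt {m n : Type} [Fintype m] [Fintype n] [DecidableEq m] [DecidableEq n]
    {k : ℕ} (A : Matrix m n ℂ) (h : A.rank < k)
    (f : Fin k → m) (g : Fin k → n) : (A.submatrix f g).det = 0 := by
  by_contra hdet
  have hu : IsUnit (A.submatrix f g) := (Matrix.isUnit_iff_isUnit_det _).mpr (isUnit_iff_ne_zero.mpr hdet)
  have h1 : (A.submatrix f g).rank = k := by simpa using Matrix.rank_of_isUnit _ hu
  have h2 := rank_submatrix_le' A f g
  omega

lemma det_submatrix_zero_of_sorted {k N : ℕ} (M : Matrix (Fin N) (Fin N) ℂ)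
    (h : ∀ f g : Fin k → Fin N, StrictMono f → StrictMono g → (M.submatrix f g).det = 0)
    (f g : Fin k → Fin N) : (M.submatrix f g).det = 0 := by
  by_cases hf : Function.Injective f
  · by_cases hg : Function.Injective g
    · set σ := Tuple.sort f
      set τ := Tuple.sort g
      have hsf : StrictMono (f ∘ σ) := (Tuple.monotone_sort f).strictMono_of_injective (hf.comp σ.injective)
      have hsg : StrictMono (g ∘ τ) := (Tuple.monotone_sort g).strictMono_of_injective (hg.comp τ.injective)
      have h0 : (M.submatrix (f ∘ σ) (g ∘ τ)).det = 0 := h _ _ hsf hsg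
      have h1 : M.submatrix (f ∘ σ) (g ∘ τ) = ((M.submatrix f g).submatrix σ id).submatrix id τ := by
        ext i j; simp
      rw [h1] at h0
      rw [Matrix.det_permute' τ, Matrix.det_permute σ] at h0
      rcases Int.units_eq_one_or (Equiv.Perm.sign σ) with hs | hs <;>
        rcases Int.units_eq_one_or (Equiv.Perm.sign τ) with ht | ht <;>
        · rw [hs, ht] at h0; simpa using h0
    · rw [Function.not_injective_iff] at hg
      obtain ⟨a, b, hab, hne⟩ := hg
      exact Matrix.det_zero_of_column_eq hne (fun i => by simp [hab])
  · rw [Function.not_injective_iff] at hf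
    obtain ⟨a, b, hab, hne⟩ := hf
    exact Matrix.det_zero_of_row_eq hne (by funext j; simp [hab])


set_option maxHeartbeats 1000000 in
lemma det_fin_four' (M : Matrix (Fin 4) (Fin 4) ℂ) :
    M.det =
      M 0 0 * M 1 1 * M 2 2 * M 3 3 - M 0 0 * M 1 1 * M 2 3 * M 3 2 -
      M 0 0 * M 1 2 * M 2 1 * M 3 3 + M 0 0 * M 1 2 * M 2 3 * M 3 1 +
      M 0 0 * M 1 3 * M 2 1 * M 3 2 - M 0 0 * M 1 3 * M 2 2 * M 3 1 -
      M 0 1 * M 1 0 * M 2 2 * M 3 3 + M 0 1 * M 1 0 * M 2 3 * M 3 2 +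
      M 0 1 * M 1 2 * M 2 0 * M 3 3 - M 0 1 * M 1 2 * M 2 3 * M 3 0 -
      M 0 1 * M 1 3 * M 2 0 * M 3 2 + M 0 1 * M 1 3 * M 2 2 * M 3 0 +
      M 0 2 * M 1 0 * M 2 1 * M 3 3 - M 0 2 * M 1 0 * M 2 3 * M 3 1 -
      M 0 2 * M 1 1 * M 2 0 * M 3 3 + M 0 2 * M 1 1 * M 2 3 * M 3 0 +
      M 0 2 * M 1 3 * M 2 0 * M 3 1 - M 0 2 * M 1 3 * M 2 1 * M 3 0 -
      M 0 3 * M 1 0 * M 2 1 * M 3 2 + M 0 3 * M 1 0 * M 2 2 * M 3 1 +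
      M 0 3 * M 1 1 * M 2 0 * M 3 2 - M 0 3 * M 1 1 * M 2 2 * M 3 0 -
      M 0 3 * M 1 2 * M 2 0 * M 3 1 + M 0 3 * M 1 2 * M 2 1 * M 3 0 := by
  rw [show M = !![M 0 0, M 0 1, M 0 2, M 0 3; M 1 0, M 1 1, M 1 2, M 1 3;
      M 2 0, M 2 1, M 2 2, M 2 3; M 3 0, M 3 1, M 3 2, M 3 3] by
    ext i j; fin_cases i <;> fin_cases j <;> rfl]
  simp [Matrix.det_succ_row_zero, Fin.sum_univ_succ, show ((1:Fin 4).succAbove 2) = 3 from rfl, show ((2:Fin 4).succAbove 2) = 3 from rfl, show (Fin.castSucc 2 : Fin 4) = 2 from rfl, show ((3:Fin 4).succAbove 2) = 2 from rfl]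
  ring

lemma sm1 : ∀ f : Fin 1 → Fin 4, StrictMono f → (f = ![0] ∨ f = ![1] ∨ f = ![2] ∨ f = ![3]) := by decide

lemma cert1 (t : Fin 2 → Fin 2 → Fin 2 → Fin 2 → ℂ)
    (hB : ∀ f g : Fin 1 → Fin 4, ((matA (sw23 t)).submatrix f g).det = 0)
    (hC : ∀ f g : Fin 1 → Fin 4, ((matA (sw24 t)).submatrix f g).det = 0) :
    ∀ f g : Fin 1 → Fin 4, ((matA t).submatrix f g).det = 0 := by
  apply det_submatrix_zero_of_sorted
  intro f g hf hg
  rcases sm1 f hf with rfl|rfl|rfl|rfl <;>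
      rcases sm1 g hg with rfl|rfl|rfl|rfl
  · have h1 := hB ![0] ![0]
    simp [Matrix.det_fin_one, matA, sw23, sw24, d1, d2] at h1 ⊢
    linear_combination h1
  · have h1 := hB ![0] ![1]
    simp [Matrix.det_fin_one, matA, sw23, sw24, d1, d2] at h1 ⊢
    linear_combination h1
  · have h1 := hB ![1] ![0]
    simp [Matrix.det_fin_one, matA, sw23, sw24, d1, d2] at h1 ⊢
    linear_combination h1
  · have h1 := hB ![1] ![1]
    simp [Matrix.det_fin_one, matA, sw23, sw24, d1, d2] at h1 ⊢
    linear_combination h1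
  · have h1 := hB ![0] ![2]
    simp [Matrix.det_fin_one, matA, sw23, sw24, d1, d2] at h1 ⊢
    linear_combination h1
  · have h1 := hB ![0] ![3]
    simp [Matrix.det_fin_one, matA, sw23, sw24, d1, d2] at h1 ⊢
    linear_combination h1
  · have h1 := hB ![1] ![2]
    simp [Matrix.det_fin_one, matA, sw23, sw24, d1, d2] at h1 ⊢
    linear_combination h1
  · have h1 := hB ![1] ![3]
    simp [Matrix.det_fin_one, matA, sw23, sw24, d1, d2] at h1 ⊢
    linear_combination h1
  · have h1 := hB ![2] ![0]
    simp [Matrix.det_fin_one, matA, sw23, sw24, d1, d2] at h1 ⊢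
    linear_combination h1
  · have h1 := hB ![2] ![1]
    simp [Matrix.det_fin_one, matA, sw23, sw24, d1, d2] at h1 ⊢
    linear_combination h1
  · have h1 := hB ![3] ![0]
    simp [Matrix.det_fin_one, matA, sw23, sw24, d1, d2] at h1 ⊢
    linear_combination h1
  · have h1 := hB ![3] ![1]
    simp [Matrix.det_fin_one, matA, sw23, sw24, d1, d2] at h1 ⊢
    linear_combination h1
  · have h1 := hB ![2] ![2]
    simp [Matrix.det_fin_one, matA, sw23, sw24, d1, d2] at h1 ⊢
    linear_combination h1
  · have h1 := hB ![2] ![3]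
    simp [Matrix.det_fin_one, matA, sw23, sw24, d1, d2] at h1 ⊢
    linear_combination h1
  · have h1 := hB ![3] ![2]
    simp [Matrix.det_fin_one, matA, sw23, sw24, d1, d2] at h1 ⊢
    linear_combination h1
  · have h1 := hB ![3] ![3]
    simp [Matrix.det_fin_one, matA, sw23, sw24, d1, d2] at h1 ⊢
    linear_combination h1

lemma sm2 : ∀ f : Fin 2 → Fin 4, StrictMono f → (f = ![0,1] ∨ f = ![0,2] ∨ f = ![0,3] ∨ f = ![1,2] ∨ f = ![1,3] ∨ f = ![2,3]) := by decide

lemma cert2 (t : Fin 2 → Fin 2 → Fin 2 → Fin 2 → ℂ)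
    (hB : ∀ f g : Fin 2 → Fin 4, ((matA (sw23 t)).submatrix f g).det = 0)
    (hC : ∀ f g : Fin 2 → Fin 4, ((matA (sw24 t)).submatrix f g).det = 0) :
    ∀ f g : Fin 2 → Fin 4, ((matA t).submatrix f g).det = 0 := by
  apply det_submatrix_zero_of_sorted
  intro f g hf hg
  rcases sm2 f hf with rfl|rfl|rfl|rfl|rfl|rfl <;>
      rcases sm2 g hg with rfl|rfl|rfl|rfl|rfl|rfl
  · have h1 := hC ![0,1] ![0,1]
    simp [Matrix.det_fin_two, matA, sw23, sw24, d1, d2] at h1 ⊢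
    linear_combination h1
  · have h1 := hB ![0,1] ![0,2]
    simp [Matrix.det_fin_two, matA, sw23, sw24, d1, d2] at h1 ⊢
    linear_combination h1
  · have h1 := hB ![0,1] ![1,2]; have h2 := hC ![0,1] ![0,3]
    simp [Matrix.det_fin_two, matA, sw23, sw24, d1, d2] at h1 h2 ⊢
    linear_combination h1 + h2
  · have h1 := hB ![0,1] ![0,3]; have h2 := hC ![0,1] ![0,3]
    simp [Matrix.det_fin_two, matA, sw23, sw24, d1, d2] at h1 h2 ⊢
    linear_combination h1 - h2
  · have h1 := hB ![0,1] ![1,3]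
    simp [Matrix.det_fin_two, matA, sw23, sw24, d1, d2] at h1 ⊢
    linear_combination h1
  · have h1 := hC ![0,1] ![2,3]
    simp [Matrix.det_fin_two, matA, sw23, sw24, d1, d2] at h1 ⊢
    linear_combination h1
  · have h1 := hB ![0,2] ![0,1]
    simp [Matrix.det_fin_two, matA, sw23, sw24, d1, d2] at h1 ⊢
    linear_combination h1
  · have h1 := hC ![0,2] ![0,2]
    simp [Matrix.det_fin_two, matA, sw23, sw24, d1, d2] at h1 ⊢
    linear_combination h1
  · have h1 := hB ![1,2] ![0,1]; have h2 := hC ![0,3] ![0,2]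
    simp [Matrix.det_fin_two, matA, sw23, sw24, d1, d2] at h1 h2 ⊢
    linear_combination h1 + h2
  · have h1 := hB ![0,3] ![0,1]; have h2 := hC ![0,3] ![0,2]
    simp [Matrix.det_fin_two, matA, sw23, sw24, d1, d2] at h1 h2 ⊢
    linear_combination -h1 + h2
  · have h1 := hC ![1,3] ![0,2]
    simp [Matrix.det_fin_two, matA, sw23, sw24, d1, d2] at h1 ⊢
    linear_combination h1
  · have h1 := hB ![1,3] ![0,1]
    simp [Matrix.det_fin_two, matA, sw23, sw24, d1, d2] at h1 ⊢
    linear_combination h1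
  · have h1 := hB ![0,2] ![1,2]; have h2 := hC ![0,3] ![0,1]
    simp [Matrix.det_fin_two, matA, sw23, sw24, d1, d2] at h1 h2 ⊢
    linear_combination -h1 + h2
  · have h1 := hB ![1,2] ![0,2]; have h2 := hC ![0,2] ![0,3]
    simp [Matrix.det_fin_two, matA, sw23, sw24, d1, d2] at h1 h2 ⊢
    linear_combination -h1 + h2
  · have h1 := hB ![1,2] ![1,2]; have h2 := hC ![0,3] ![0,3]
    simp [Matrix.det_fin_two, matA, sw23, sw24, d1, d2] at h1 h2 ⊢
    linear_combination -h1 + h2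
  · have h1 := hB ![0,3] ![1,2]; have h2 := hC ![0,3] ![1,2]
    simp [Matrix.det_fin_two, matA, sw23, sw24, d1, d2] at h1 h2 ⊢
    linear_combination h1 + h2
  · have h1 := hB ![1,2] ![1,3]; have h2 := hC ![1,3] ![0,3]
    simp [Matrix.det_fin_two, matA, sw23, sw24, d1, d2] at h1 h2 ⊢
    linear_combination -h1 + h2
  · have h1 := hB ![1,3] ![1,2]; have h2 := hC ![0,3] ![2,3]
    simp [Matrix.det_fin_two, matA, sw23, sw24, d1, d2] at h1 h2 ⊢
    linear_combination -h1 + h2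
  · have h1 := hB ![0,2] ![0,3]; have h2 := hC ![0,3] ![0,1]
    simp [Matrix.det_fin_two, matA, sw23, sw24, d1, d2] at h1 h2 ⊢
    linear_combination h1 - h2
  · have h1 := hB ![0,3] ![0,2]; have h2 := hC ![0,2] ![0,3]
    simp [Matrix.det_fin_two, matA, sw23, sw24, d1, d2] at h1 h2 ⊢
    linear_combination -h1 + h2
  · have h1 := hB ![1,2] ![0,3]; have h2 := hC ![0,3] ![1,2]
    simp [Matrix.det_fin_two, matA, sw23, sw24, d1, d2] at h1 h2 ⊢
    linear_combination h1 + h2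
  · have h1 := hB ![0,3] ![0,3]; have h2 := hC ![0,3] ![0,3]
    simp [Matrix.det_fin_two, matA, sw23, sw24, d1, d2] at h1 h2 ⊢
    linear_combination -h1 + h2
  · have h1 := hB ![0,3] ![1,3]; have h2 := hC ![1,3] ![0,3]
    simp [Matrix.det_fin_two, matA, sw23, sw24, d1, d2] at h1 h2 ⊢
    linear_combination -h1 + h2
  · have h1 := hB ![1,3] ![0,3]; have h2 := hC ![0,3] ![2,3]
    simp [Matrix.det_fin_two, matA, sw23, sw24, d1, d2] at h1 h2 ⊢
    linear_combination h1 - h2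
  · have h1 := hB ![0,2] ![2,3]
    simp [Matrix.det_fin_two, matA, sw23, sw24, d1, d2] at h1 ⊢
    linear_combination h1
  · have h1 := hC ![0,2] ![1,3]
    simp [Matrix.det_fin_two, matA, sw23, sw24, d1, d2] at h1 ⊢
    linear_combination h1
  · have h1 := hB ![1,2] ![2,3]; have h2 := hC ![0,3] ![1,3]
    simp [Matrix.det_fin_two, matA, sw23, sw24, d1, d2] at h1 h2 ⊢
    linear_combination h1 + h2
  · have h1 := hB ![0,3] ![2,3]; have h2 := hC ![0,3] ![1,3]
    simp [Matrix.det_fin_two, matA, sw23, sw24, d1, d2] at h1 h2 ⊢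
    linear_combination -h1 + h2
  · have h1 := hC ![1,3] ![1,3]
    simp [Matrix.det_fin_two, matA, sw23, sw24, d1, d2] at h1 ⊢
    linear_combination h1
  · have h1 := hB ![1,3] ![2,3]
    simp [Matrix.det_fin_two, matA, sw23, sw24, d1, d2] at h1 ⊢
    linear_combination h1
  · have h1 := hC ![2,3] ![0,1]
    simp [Matrix.det_fin_two, matA, sw23, sw24, d1, d2] at h1 ⊢
    linear_combination h1
  · have h1 := hB ![2,3] ![0,2]
    simp [Matrix.det_fin_two, matA, sw23, sw24, d1, d2] at h1 ⊢
    linear_combination h1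
  · have h1 := hB ![2,3] ![1,2]; have h2 := hC ![2,3] ![0,3]
    simp [Matrix.det_fin_two, matA, sw23, sw24, d1, d2] at h1 h2 ⊢
    linear_combination h1 + h2
  · have h1 := hB ![2,3] ![0,3]; have h2 := hC ![2,3] ![0,3]
    simp [Matrix.det_fin_two, matA, sw23, sw24, d1, d2] at h1 h2 ⊢
    linear_combination h1 - h2
  · have h1 := hB ![2,3] ![1,3]
    simp [Matrix.det_fin_two, matA, sw23, sw24, d1, d2] at h1 ⊢
    linear_combination h1
  · have h1 := hC ![2,3] ![2,3]
    simp [Matrix.det_fin_two, matA, sw23, sw24, d1, d2] at h1 ⊢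
    linear_combination h1

lemma sm3 : ∀ f : Fin 3 → Fin 4, StrictMono f → (f = ![0,1,2] ∨ f = ![0,1,3] ∨ f = ![0,2,3] ∨ f = ![1,2,3]) := by decide

lemma cert3 (t : Fin 2 → Fin 2 → Fin 2 → Fin 2 → ℂ)
    (hB : ∀ f g : Fin 3 → Fin 4, ((matA (sw23 t)).submatrix f g).det = 0)
    (hC : ∀ f g : Fin 3 → Fin 4, ((matA (sw24 t)).submatrix f g).det = 0) :
    ∀ f g : Fin 3 → Fin 4, ((matA t).submatrix f g).det = 0 := by
  apply det_submatrix_zero_of_sorted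
  intro f g hf hg
  rcases sm3 f hf with rfl|rfl|rfl|rfl <;>
      rcases sm3 g hg with rfl|rfl|rfl|rfl
  · have h1 := hB ![0,1,2] ![0,1,2]; have h2 := hC ![0,1,2] ![0,1,2]
    simp [Matrix.det_fin_three, matA, sw23, sw24, d1, d2] at h1 h2 ⊢
    linear_combination h1 + h2
  · have h1 := hB ![0,1,2] ![0,1,3]; have h2 := hC ![0,1,3] ![0,1,2]
    simp [Matrix.det_fin_three, matA, sw23, sw24, d1, d2] at h1 h2 ⊢
    linear_combination h1 + h2
  · have h1 := hB ![0,1,3] ![0,1,2]; have h2 := hC ![0,1,2] ![0,2,3]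
    simp [Matrix.det_fin_three, matA, sw23, sw24, d1, d2] at h1 h2 ⊢
    linear_combination -h1 + h2
  · have h1 := hB ![0,1,3] ![0,1,3]; have h2 := hC ![0,1,3] ![0,2,3]
    simp [Matrix.det_fin_three, matA, sw23, sw24, d1, d2] at h1 h2 ⊢
    linear_combination -h1 + h2
  · have h1 := hB ![0,1,2] ![0,2,3]; have h2 := hC ![0,1,2] ![0,1,3]
    simp [Matrix.det_fin_three, matA, sw23, sw24, d1, d2] at h1 h2 ⊢
    linear_combination -h1 + h2
  · have h1 := hB ![0,1,2] ![1,2,3]; have h2 := hC ![0,1,3] ![0,1,3]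
    simp [Matrix.det_fin_three, matA, sw23, sw24, d1, d2] at h1 h2 ⊢
    linear_combination -h1 + h2
  · have h1 := hB ![0,1,3] ![0,2,3]; have h2 := hC ![0,1,2] ![1,2,3]
    simp [Matrix.det_fin_three, matA, sw23, sw24, d1, d2] at h1 h2 ⊢
    linear_combination h1 + h2
  · have h1 := hB ![0,1,3] ![1,2,3]; have h2 := hC ![0,1,3] ![1,2,3]
    simp [Matrix.det_fin_three, matA, sw23, sw24, d1, d2] at h1 h2 ⊢
    linear_combination h1 + h2
  · have h1 := hB ![0,2,3] ![0,1,2]; have h2 := hC ![0,2,3] ![0,1,2]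
    simp [Matrix.det_fin_three, matA, sw23, sw24, d1, d2] at h1 h2 ⊢
    linear_combination h1 + h2
  · have h1 := hB ![0,2,3] ![0,1,3]; have h2 := hC ![1,2,3] ![0,1,2]
    simp [Matrix.det_fin_three, matA, sw23, sw24, d1, d2] at h1 h2 ⊢
    linear_combination h1 + h2
  · have h1 := hB ![1,2,3] ![0,1,2]; have h2 := hC ![0,2,3] ![0,2,3]
    simp [Matrix.det_fin_three, matA, sw23, sw24, d1, d2] at h1 h2 ⊢
    linear_combination -h1 + h2
  · have h1 := hB ![1,2,3] ![0,1,3]; have h2 := hC ![1,2,3] ![0,2,3]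
    simp [Matrix.det_fin_three, matA, sw23, sw24, d1, d2] at h1 h2 ⊢
    linear_combination -h1 + h2
  · have h1 := hB ![0,2,3] ![0,2,3]; have h2 := hC ![0,2,3] ![0,1,3]
    simp [Matrix.det_fin_three, matA, sw23, sw24, d1, d2] at h1 h2 ⊢
    linear_combination -h1 + h2
  · have h1 := hB ![0,2,3] ![1,2,3]; have h2 := hC ![1,2,3] ![0,1,3]
    simp [Matrix.det_fin_three, matA, sw23, sw24, d1, d2] at h1 h2 ⊢
    linear_combination -h1 + h2
  · have h1 := hB ![1,2,3] ![0,2,3]; have h2 := hC ![0,2,3] ![1,2,3]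
    simp [Matrix.det_fin_three, matA, sw23, sw24, d1, d2] at h1 h2 ⊢
    linear_combination h1 + h2
  · have h1 := hB ![1,2,3] ![1,2,3]; have h2 := hC ![1,2,3] ![1,2,3]
    simp [Matrix.det_fin_three, matA, sw23, sw24, d1, d2] at h1 h2 ⊢
    linear_combination h1 + h2

lemma sm4 : ∀ f : Fin 4 → Fin 4, StrictMono f → (f = ![0,1,2,3]) := by decide

lemma cert4 (t : Fin 2 → Fin 2 → Fin 2 → Fin 2 → ℂ)
    (hB : ∀ f g : Fin 4 → Fin 4, ((matA (sw23 t)).submatrix f g).det = 0)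
    (hC : ∀ f g : Fin 4 → Fin 4, ((matA (sw24 t)).submatrix f g).det = 0) :
    ∀ f g : Fin 4 → Fin 4, ((matA t).submatrix f g).det = 0 := by
  apply det_submatrix_zero_of_sorted
  intro f g hf hg
  rcases sm4 f hf with rfl <;>
      rcases sm4 g hg with rfl
  · have h1 := hB ![0,1,2,3] ![0,1,2,3]; have h2 := hC ![0,1,2,3] ![0,1,2,3]
    simp [det_fin_four', matA, sw23, sw24, d1, d2] at h1 h2 ⊢
    linear_combination h1 + h2

lemma rank_matA_swc (t : Fin 2 → Fin 2 → Fin 2 → Fin 2 → ℂ) :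
    (matA (swc t)).rank = (matA t).rank := by
  have h : matA (swc t) = (matA t).submatrix (Equiv.refl (Fin 4)) (Equiv.swap 1 2) := by
    ext r c
    fin_cases r <;> fin_cases c <;> rfl
  rw [h, Matrix.rank_submatrix]

lemma core (t : Fin 2 → Fin 2 → Fin 2 → Fin 2 → ℂ) :
    (matA t).rank ≤ max (matA (sw23 t)).rank (matA (sw24 t)).rank := by
  by_contra hcon
  push_neg at hcon
  obtain ⟨k, hk⟩ : ∃ k, (matA t).rank = k := ⟨_, rfl⟩
  rw [hk] at hcon
  have hB : (matA (sw23 t)).rank < k := (le_max_left _ _).trans_lt hcon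
  have hC : (matA (sw24 t)).rank < k := (le_max_right _ _).trans_lt hcon
  have hk4 : k ≤ 4 := by
    have := (matA t).rank_le_card_width
    simp only [Fintype.card_fin] at this
    omega
  obtain ⟨f, g, hfg⟩ := exists_submatrix_det_ne_zero (matA t) k hk.ge
  have hBz : ∀ f g : Fin k → Fin 4, ((matA (sw23 t)).submatrix f g).det = 0 :=
    fun f g => minors_zero_of_rank_lt _ hB f g
  have hCz : ∀ f g : Fin k → Fin 4, ((matA (sw24 t)).submatrix f g).det = 0 :=
    fun f g => minors_zero_of_rank_lt _ hC f g
  have hcases : k = 1 ∨ k = 2 ∨ k = 3 ∨ k = 4 := by omega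
  rcases hcases with rfl | rfl | rfl | rfl
  · exact hfg (cert1 t hBz hCz f g)
  · exact hfg (cert2 t hBz hCz f g)
  · exact hfg (cert3 t hBz hCz f g)
  · exact hfg (cert4 t hBz hCz f g)

lemma coreB (t : Fin 2 → Fin 2 → Fin 2 → Fin 2 → ℂ) :
    (matA (sw23 t)).rank ≤ max (matA t).rank (matA (sw24 t)).rank := by
  have h := core (sw23 t)
  rw [show sw23 (sw23 t) = t from rfl, show sw24 (sw23 t) = swc (sw24 t) from rfl,
    rank_matA_swc] at h
  exact h

lemma coreC (t : Fin 2 → Fin 2 → Fin 2 → Fin 2 → ℂ) :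
    (matA (sw24 t)).rank ≤ max (matA t).rank (matA (sw23 t)).rank := by
  have h := core (sw24 t)
  rw [show sw23 (sw24 t) = swc (sw23 t) from rfl, show sw24 (sw24 t) = t from rfl,
    rank_matA_swc] at h
  exact h.trans (by rw [max_comm])

lemma rank_eq_of_certs {r : ℕ} (M : Matrix (Fin 4) (Fin 4) ℂ) (P : Matrix (Fin 4) (Fin r) ℂ)
    (Q : Matrix (Fin r) (Fin 4) ℂ) (hM : M = P * Q) (f g : Fin r → Fin 4)
    (hdet : (M.submatrix f g).det ≠ 0) : M.rank = r := by
  refine le_antisymm ?_ ?_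
  · rw [hM]
    refine (Matrix.rank_mul_le_left P Q).trans ?_
    have := P.rank_le_card_width
    simpa using this
  · by_contra h
    push_neg at h
    exact hdet (minors_zero_of_rank_lt M h f g)

lemma rank_le_one_outer {m n : Type} [Fintype m] [Fintype n] [DecidableEq m] [DecidableEq n]
    (A : Matrix m n ℂ) (h : A.rank ≤ 1) :
    ∃ (u : m → ℂ) (v : n → ℂ), ∀ i j, A i j = u i * v j := by
  by_cases hA : A = 0
  · exact ⟨0, 0, fun i j => by simp [hA]⟩
  · have : ∃ i0 j0, A i0 j0 ≠ 0 := by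
      by_contra hc
      push_neg at hc
      exact hA (by ext i j; simpa using hc i j)
    obtain ⟨i0, j0, h0⟩ := this
    have hcol : ∀ j, ∃ α : ℂ, Aᵀ j = α • Aᵀ j0 := by
      intro j
      by_contra hc
      push_neg at hc
      have hind : LinearIndependent ℂ ![Aᵀ j, Aᵀ j0] := by
        rw [linearIndependent_fin2]
        simp only [Matrix.cons_val_one, Matrix.head_cons, Matrix.cons_val_zero]
        exact ⟨fun hz => h0 (by simpa using congrFun hz i0), fun a ha => hc a ha.symm⟩
      have hrank : (Aᵀ.submatrix ![j, j0] id).rank = 2 := by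
        have hli : LinearIndependent ℂ (fun s => (Aᵀ.submatrix ![j, j0] id) s) := by
          have he : (fun s => (Aᵀ.submatrix ![j, j0] id) s) = ![Aᵀ j, Aᵀ j0] := by
            funext s
            fin_cases s <;> rfl
          rw [he]; exact hind
        simpa using hli.rank_matrix (M := Aᵀ.submatrix ![j, j0] id)
      have h1 := rank_submatrix_le' Aᵀ ![j, j0] (id : m → m)
      rw [Matrix.rank_transpose] at h1
      omega
    choose α hα using hcol
    refine ⟨fun i => A i j0, α, fun i j => ?_⟩
    have := congrFun (hα j) i
    simp only [Matrix.transpose_apply, Pi.smul_apply, smul_eq_mul] at this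
    rw [this]; ring

lemma sing2_outer (U : Matrix (Fin 2) (Fin 2) ℂ) (h : U.det = 0) :
    ∃ a b : Fin 2 → ℂ, ∀ i j, U i j = a i * b j := by
  rw [Matrix.det_fin_two] at h
  by_cases h00 : U 0 0 ≠ 0
  · refine ⟨![U 0 0, U 1 0], ![1, U 0 1 / U 0 0], fun i j => ?_⟩
    fin_cases i <;> fin_cases j <;> simp <;> field_simp <;> linear_combination h
  · push_neg at h00
    by_cases h01 : U 0 1 ≠ 0
    · refine ⟨![U 0 1, U 1 1], ![U 0 0 / U 0 1, 1], fun i j => ?_⟩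
      fin_cases i <;> fin_cases j <;> simp <;> field_simp <;> linear_combination -h
    · push_neg at h01
      refine ⟨![0, 1], ![U 1 0, U 1 1], fun i j => ?_⟩
      fin_cases i <;> fin_cases j <;> simp [h00, h01]

def enc2 : Fin 2 → Fin 2 → Fin 4 := fun i j => ![![0, 1], ![2, 3]] i j

lemma kron_rank_ne_three (U V : Matrix (Fin 2) (Fin 2) ℂ)
    (M : Matrix (Fin 4) (Fin 4) ℂ)
    (hM : ∀ r c, M r c = U (d1 r) (d1 c) * V (d2 r) (d2 c)) : M.rank ≠ 3 := by
  by_cases hU : U.det = 0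
  · obtain ⟨a, b, hab⟩ := sing2_outer U hU
    have hfac : M = (Matrix.of fun (r : Fin 4) (s : Fin 2) => a (d1 r) * V (d2 r) s) *
        (Matrix.of fun (s : Fin 2) (c : Fin 4) => b (d1 c) * (if s = d2 c then 1 else 0)) := by
      ext r c
      rw [hM r c, hab]
      simp [Matrix.mul_apply, Fin.sum_univ_succ]
      fin_cases c <;> simp [d1, d2] <;> ring
    intro h3
    have : M.rank ≤ 2 := by
      rw [hfac]
      refine (Matrix.rank_mul_le_left _ _).trans ?_
      exact (Matrix.rank_le_card_width _).trans (by simp)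
    omega
  · by_cases hV : V.det = 0
    · obtain ⟨a, b, hab⟩ := sing2_outer V hV
      have hfac : M = (Matrix.of fun (r : Fin 4) (s : Fin 2) => a (d2 r) * U (d1 r) s) *
          (Matrix.of fun (s : Fin 2) (c : Fin 4) => b (d2 c) * (if s = d1 c then 1 else 0)) := by
        ext r c
        rw [hM r c, hab]
        simp [Matrix.mul_apply, Fin.sum_univ_succ]
        fin_cases c <;> simp [d1, d2] <;> ring
      intro h3
      have : M.rank ≤ 2 := by
        rw [hfac]
        refine (Matrix.rank_mul_le_left _ _).trans ?_
        exact (Matrix.rank_le_card_width _).trans (by simp)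
      omega
    · have hdet : M.det = U.det ^ 2 * V.det ^ 2 := by
        rw [det_fin_four']
        simp only [hM]
        rw [Matrix.det_fin_two, Matrix.det_fin_two]
        norm_num [d1, d2]
        ring
      intro h3
      have hu : IsUnit M := by
        rw [Matrix.isUnit_iff_isUnit_det, hdet]
        exact (isUnit_iff_ne_zero.mpr (pow_ne_zero 2 hU)).mul (isUnit_iff_ne_zero.mpr (pow_ne_zero 2 hV))
      have := Matrix.rank_of_isUnit M hu
      simp only [Fintype.card_fin] at this
      omega

lemma d1_enc2 : ∀ i j, d1 (enc2 i j) = i := by decide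
lemma d2_enc2 : ∀ i j, d2 (enc2 i j) = j := by decide

lemma excl (t : Fin 2 → Fin 2 → Fin 2 → Fin 2 → ℂ) (h1 : (matA t).rank ≤ 1) :
    (matA (sw23 t)).rank ≠ 3 := by
  obtain ⟨u, v, huv⟩ := rank_le_one_outer (matA t) h1
  have ht : ∀ i j k l, t i j k l = u (enc2 i j) * v (enc2 k l) := by
    intro i j k l
    have := huv (enc2 i j) (enc2 k l)
    simpa [matA, d1_enc2, d2_enc2] using this
  apply kron_rank_ne_three (Matrix.of fun i j => u (enc2 i j)) (Matrix.of fun k l => v (enc2 k l))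
  intro r c
  exact ht (d1 r) (d1 c) (d2 r) (d2 c)

lemma conv1 (T : (Fin 4 → Fin 2) → ℂ) :
    rk2 ({0, 1} : Finset (Fin 4)) T = (matA (fun i j k l => T ![i, j, k, l])).rank := by
  show (Matrix.of fun (a : ∀ i : {x // x ∈ ({0,1} : Finset (Fin 4))}, Fin 2)
      (b : ∀ i : {x // x ∉ ({0,1} : Finset (Fin 4))}, Fin 2) =>
      T fun i => if h : i ∈ ({0,1} : Finset (Fin 4)) then a ⟨i, h⟩ else b ⟨i, h⟩).rank = _
  set M := Matrix.of fun (a : ∀ i : {x // x ∈ ({0,1} : Finset (Fin 4))}, Fin 2)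
      (b : ∀ i : {x // x ∉ ({0,1} : Finset (Fin 4))}, Fin 2) =>
      T fun i => if h : i ∈ ({0,1} : Finset (Fin 4)) then a ⟨i, h⟩ else b ⟨i, h⟩ with hM
  set ρ : Fin 4 → (∀ i : {x // x ∈ ({0,1} : Finset (Fin 4))}, Fin 2) :=
    fun r => fun i => if i.1 = 0 then d1 r else d2 r with hρ
  set κ : Fin 4 → (∀ i : {x // x ∉ ({0,1} : Finset (Fin 4))}, Fin 2) :=
    fun c => fun i => if i.1 = 2 then d1 c else d2 c with hκ
  set ρ' : (∀ i : {x // x ∈ ({0,1} : Finset (Fin 4))}, Fin 2) → Fin 4 :=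
    fun a => ![![0,1],![2,3]] (a ⟨0, by decide⟩) (a ⟨1, by decide⟩) with hρ'
  set κ' : (∀ i : {x // x ∉ ({0,1} : Finset (Fin 4))}, Fin 2) → Fin 4 :=
    fun b => ![![0,1],![2,3]] (b ⟨2, by decide⟩) (b ⟨3, by decide⟩) with hκ'
  have hcρ : ∀ a, ρ (ρ' a) = a := by decide
  have hcκ : ∀ b, κ (κ' b) = b := by decide
  have e1 : matA (fun i j k l => T ![i, j, k, l]) = M.submatrix ρ κ := by
    ext r c
    show T _ = T _
    congr 1
    fin_cases r <;> fin_cases c <;> decide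
  have e2 : M = (M.submatrix ρ κ).submatrix ρ' κ' := by
    ext a b
    show M a b = M (ρ (ρ' a)) (κ (κ' b))
    rw [hcρ a, hcκ b]
  rw [e1]
  refine le_antisymm ?_ (rank_submatrix_le' M ρ κ)
  conv_lhs => rw [e2]
  exact rank_submatrix_le' _ ρ' κ'

lemma conv2 (T : (Fin 4 → Fin 2) → ℂ) :
    rk2 ({0, 2} : Finset (Fin 4)) T = (matA (sw23 (fun i j k l => T ![i, j, k, l]))).rank := by
  show (Matrix.of fun (a : ∀ i : {x // x ∈ ({0,2} : Finset (Fin 4))}, Fin 2)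
      (b : ∀ i : {x // x ∉ ({0,2} : Finset (Fin 4))}, Fin 2) =>
      T fun i => if h : i ∈ ({0,2} : Finset (Fin 4)) then a ⟨i, h⟩ else b ⟨i, h⟩).rank = _
  set M := Matrix.of fun (a : ∀ i : {x // x ∈ ({0,2} : Finset (Fin 4))}, Fin 2)
      (b : ∀ i : {x // x ∉ ({0,2} : Finset (Fin 4))}, Fin 2) =>
      T fun i => if h : i ∈ ({0,2} : Finset (Fin 4)) then a ⟨i, h⟩ else b ⟨i, h⟩ with hM
  set ρ : Fin 4 → (∀ i : {x // x ∈ ({0,2} : Finset (Fin 4))}, Fin 2) :=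
    fun r => fun i => if i.1 = 0 then d1 r else d2 r with hρ
  set κ : Fin 4 → (∀ i : {x // x ∉ ({0,2} : Finset (Fin 4))}, Fin 2) :=
    fun c => fun i => if i.1 = 1 then d1 c else d2 c with hκ
  set ρ' : (∀ i : {x // x ∈ ({0,2} : Finset (Fin 4))}, Fin 2) → Fin 4 :=
    fun a => ![![0,1],![2,3]] (a ⟨0, by decide⟩) (a ⟨2, by decide⟩) with hρ'
  set κ' : (∀ i : {x // x ∉ ({0,2} : Finset (Fin 4))}, Fin 2) → Fin 4 :=
    fun b => ![![0,1],![2,3]] (b ⟨1, by decide⟩) (b ⟨3, by decide⟩) with hκ'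
  have hcρ : ∀ a, ρ (ρ' a) = a := by decide
  have hcκ : ∀ b, κ (κ' b) = b := by decide
  have e1 : matA (sw23 (fun i j k l => T ![i, j, k, l])) = M.submatrix ρ κ := by
    ext r c
    show T _ = T _
    congr 1
    fin_cases r <;> fin_cases c <;> decide
  have e2 : M = (M.submatrix ρ κ).submatrix ρ' κ' := by
    ext a b
    show M a b = M (ρ (ρ' a)) (κ (κ' b))
    rw [hcρ a, hcκ b]
  rw [e1]
  refine le_antisymm ?_ (rank_submatrix_le' M ρ κ)
  conv_lhs => rw [e2]
  exact rank_submatrix_le' _ ρ' κ'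

lemma conv3 (T : (Fin 4 → Fin 2) → ℂ) :
    rk2 ({0, 3} : Finset (Fin 4)) T = (matA (sw24 (fun i j k l => T ![i, j, k, l]))).rank := by
  show (Matrix.of fun (a : ∀ i : {x // x ∈ ({0,3} : Finset (Fin 4))}, Fin 2)
      (b : ∀ i : {x // x ∉ ({0,3} : Finset (Fin 4))}, Fin 2) =>
      T fun i => if h : i ∈ ({0,3} : Finset (Fin 4)) then a ⟨i, h⟩ else b ⟨i, h⟩).rank = _
  set M := Matrix.of fun (a : ∀ i : {x // x ∈ ({0,3} : Finset (Fin 4))}, Fin 2)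
      (b : ∀ i : {x // x ∉ ({0,3} : Finset (Fin 4))}, Fin 2) =>
      T fun i => if h : i ∈ ({0,3} : Finset (Fin 4)) then a ⟨i, h⟩ else b ⟨i, h⟩ with hM
  set ρ : Fin 4 → (∀ i : {x // x ∈ ({0,3} : Finset (Fin 4))}, Fin 2) :=
    fun r => fun i => if i.1 = 0 then d1 r else d2 r with hρ
  set κ : Fin 4 → (∀ i : {x // x ∉ ({0,3} : Finset (Fin 4))}, Fin 2) :=
    fun c => fun i => if i.1 = 1 then d2 c else d1 c with hκ
  set ρ' : (∀ i : {x // x ∈ ({0,3} : Finset (Fin 4))}, Fin 2) → Fin 4 :=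
    fun a => ![![0,1],![2,3]] (a ⟨0, by decide⟩) (a ⟨3, by decide⟩) with hρ'
  set κ' : (∀ i : {x // x ∉ ({0,3} : Finset (Fin 4))}, Fin 2) → Fin 4 :=
    fun b => ![![0,1],![2,3]] (b ⟨2, by decide⟩) (b ⟨1, by decide⟩) with hκ'
  have hcρ : ∀ a, ρ (ρ' a) = a := by decide
  have hcκ : ∀ b, κ (κ' b) = b := by decide
  have e1 : matA (sw24 (fun i j k l => T ![i, j, k, l])) = M.submatrix ρ κ := by
    ext r c
    show T _ = T _
    congr 1
    fin_cases r <;> fin_cases c <;> decide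
  have e2 : M = (M.submatrix ρ κ).submatrix ρ' κ' := by
    ext a b
    show M a b = M (ρ (ρ' a)) (κ (κ' b))
    rw [hcρ a, hcκ b]
  rw [e1]
  refine le_antisymm ?_ (rank_submatrix_le' M ρ κ)
  conv_lhs => rw [e2]
  exact rank_submatrix_le' _ ρ' κ'

noncomputable def tex111 : Fin 2 → Fin 2 → Fin 2 → Fin 2 → ℂ := fun i j k l => ![![![![0, 0], ![0, 0]], ![![0, 0], ![0, 0]]], ![![![0, 0], ![0, 0]], ![![0, 0], ![0, 1]]]] i j k l

lemma ex111 : ∃ T : (Fin 4 → Fin 2) → ℂ, T ≠ 0 ∧ rk2 {0, 1} T = 1 ∧ rk2 {0, 2} T = 1 ∧ rk2 {0, 3} T = 1 := by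
  refine ⟨fun m => tex111 (m 0) (m 1) (m 2) (m 3), ?_, ?_, ?_, ?_⟩
  · intro h
    have := congrFun h ![1, 1, 1, 1]
    simp [tex111] at this
  · rw [conv1, show (fun i j k l => (fun m => tex111 (m 0) (m 1) (m 2) (m 3)) ![i, j, k, l]) = tex111 from rfl]
    apply rank_eq_of_certs _ !![0; 0; 0; 1] !![0, 0, 0, 1] ?_ ![3] ![3] ?_
    · ext r c
      fin_cases r <;> fin_cases c <;> norm_num [Matrix.mul_apply, Fin.sum_univ_succ, matA, sw23, sw24, tex111, d1, d2, Matrix.vecHead, Matrix.vecTail, Function.comp]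
    · norm_num [Matrix.det_fin_one, matA, sw23, sw24, tex111, d1, d2, Matrix.vecHead, Matrix.vecTail, Function.comp]
  · rw [conv2, show (fun i j k l => (fun m => tex111 (m 0) (m 1) (m 2) (m 3)) ![i, j, k, l]) = tex111 from rfl]
    apply rank_eq_of_certs _ !![0; 0; 0; 1] !![0, 0, 0, 1] ?_ ![3] ![3] ?_
    · ext r c
      fin_cases r <;> fin_cases c <;> norm_num [Matrix.mul_apply, Fin.sum_univ_succ, matA, sw23, sw24, tex111, d1, d2, Matrix.vecHead, Matrix.vecTail, Function.comp]
    · norm_num [Matrix.det_fin_one, matA, sw23, sw24, tex111, d1, d2, Matrix.vecHead, Matrix.vecTail, Function.comp]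
  · rw [conv3, show (fun i j k l => (fun m => tex111 (m 0) (m 1) (m 2) (m 3)) ![i, j, k, l]) = tex111 from rfl]
    apply rank_eq_of_certs _ !![0; 0; 0; 1] !![0, 0, 0, 1] ?_ ![3] ![3] ?_
    · ext r c
      fin_cases r <;> fin_cases c <;> norm_num [Matrix.mul_apply, Fin.sum_univ_succ, matA, sw23, sw24, tex111, d1, d2, Matrix.vecHead, Matrix.vecTail, Function.comp]
    · norm_num [Matrix.det_fin_one, matA, sw23, sw24, tex111, d1, d2, Matrix.vecHead, Matrix.vecTail, Function.comp]

noncomputable def tex122 : Fin 2 → Fin 2 → Fin 2 → Fin 2 → ℂ := fun i j k l => ![![![![0, 0], ![0, 0]], ![![0, 0], ![0, 0]]], ![![![0, 0], ![0, 0]], ![![0, 1], ![1, 0]]]] i j k l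

lemma ex122 : ∃ T : (Fin 4 → Fin 2) → ℂ, T ≠ 0 ∧ rk2 {0, 1} T = 1 ∧ rk2 {0, 2} T = 2 ∧ rk2 {0, 3} T = 2 := by
  refine ⟨fun m => tex122 (m 0) (m 1) (m 2) (m 3), ?_, ?_, ?_, ?_⟩
  · intro h
    have := congrFun h ![1, 1, 0, 1]
    simp [tex122] at this
  · rw [conv1, show (fun i j k l => (fun m => tex122 (m 0) (m 1) (m 2) (m 3)) ![i, j, k, l]) = tex122 from rfl]
    apply rank_eq_of_certs _ !![0; 0; 0; 1] !![0, 1, 1, 0] ?_ ![3] ![1] ?_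
    · ext r c
      fin_cases r <;> fin_cases c <;> norm_num [Matrix.mul_apply, Fin.sum_univ_succ, matA, sw23, sw24, tex122, d1, d2, Matrix.vecHead, Matrix.vecTail, Function.comp]
    · norm_num [Matrix.det_fin_one, matA, sw23, sw24, tex122, d1, d2, Matrix.vecHead, Matrix.vecTail, Function.comp]
  · rw [conv2, show (fun i j k l => (fun m => tex122 (m 0) (m 1) (m 2) (m 3)) ![i, j, k, l]) = tex122 from rfl]
    apply rank_eq_of_certs _ !![0, 0; 0, 0; 0, 1; 1, 0] !![0, 0, 1, 0; 0, 0, 0, 1] ?_ ![2,3] ![2,3] ?_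
    · ext r c
      fin_cases r <;> fin_cases c <;> norm_num [Matrix.mul_apply, Fin.sum_univ_succ, matA, sw23, sw24, tex122, d1, d2, Matrix.vecHead, Matrix.vecTail, Function.comp]
    · norm_num [Matrix.det_fin_two, matA, sw23, sw24, tex122, d1, d2, Matrix.vecHead, Matrix.vecTail, Function.comp]
  · rw [conv3, show (fun i j k l => (fun m => tex122 (m 0) (m 1) (m 2) (m 3)) ![i, j, k, l]) = tex122 from rfl]
    apply rank_eq_of_certs _ !![0, 0; 0, 0; 0, 1; 1, 0] !![0, 1, 0, 0; 0, 0, 0, 1] ?_ ![2,3] ![1,3] ?_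
    · ext r c
      fin_cases r <;> fin_cases c <;> norm_num [Matrix.mul_apply, Fin.sum_univ_succ, matA, sw23, sw24, tex122, d1, d2, Matrix.vecHead, Matrix.vecTail, Function.comp]
    · norm_num [Matrix.det_fin_two, matA, sw23, sw24, tex122, d1, d2, Matrix.vecHead, Matrix.vecTail, Function.comp]

noncomputable def tex212 : Fin 2 → Fin 2 → Fin 2 → Fin 2 → ℂ := fun i j k l => ![![![![0, 0], ![0, 0]], ![![0, 0], ![0, 0]]], ![![![0, 0], ![0, 1]], ![![0, 0], ![1, 0]]]] i j k l

lemma ex212 : ∃ T : (Fin 4 → Fin 2) → ℂ, T ≠ 0 ∧ rk2 {0, 1} T = 2 ∧ rk2 {0, 2} T = 1 ∧ rk2 {0, 3} T = 2 := by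
  refine ⟨fun m => tex212 (m 0) (m 1) (m 2) (m 3), ?_, ?_, ?_, ?_⟩
  · intro h
    have := congrFun h ![1, 0, 1, 1]
    simp [tex212] at this
  · rw [conv1, show (fun i j k l => (fun m => tex212 (m 0) (m 1) (m 2) (m 3)) ![i, j, k, l]) = tex212 from rfl]
    apply rank_eq_of_certs _ !![0, 0; 0, 0; 0, 1; 1, 0] !![0, 0, 1, 0; 0, 0, 0, 1] ?_ ![2,3] ![2,3] ?_
    · ext r c
      fin_cases r <;> fin_cases c <;> norm_num [Matrix.mul_apply, Fin.sum_univ_succ, matA, sw23, sw24, tex212, d1, d2, Matrix.vecHead, Matrix.vecTail, Function.comp]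
    · norm_num [Matrix.det_fin_two, matA, sw23, sw24, tex212, d1, d2, Matrix.vecHead, Matrix.vecTail, Function.comp]
  · rw [conv2, show (fun i j k l => (fun m => tex212 (m 0) (m 1) (m 2) (m 3)) ![i, j, k, l]) = tex212 from rfl]
    apply rank_eq_of_certs _ !![0; 0; 0; 1] !![0, 1, 1, 0] ?_ ![3] ![1] ?_
    · ext r c
      fin_cases r <;> fin_cases c <;> norm_num [Matrix.mul_apply, Fin.sum_univ_succ, matA, sw23, sw24, tex212, d1, d2, Matrix.vecHead, Matrix.vecTail, Function.comp]
    · norm_num [Matrix.det_fin_one, matA, sw23, sw24, tex212, d1, d2, Matrix.vecHead, Matrix.vecTail, Function.comp]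
  · rw [conv3, show (fun i j k l => (fun m => tex212 (m 0) (m 1) (m 2) (m 3)) ![i, j, k, l]) = tex212 from rfl]
    apply rank_eq_of_certs _ !![0, 0; 0, 0; 0, 1; 1, 0] !![0, 0, 1, 0; 0, 0, 0, 1] ?_ ![2,3] ![2,3] ?_
    · ext r c
      fin_cases r <;> fin_cases c <;> norm_num [Matrix.mul_apply, Fin.sum_univ_succ, matA, sw23, sw24, tex212, d1, d2, Matrix.vecHead, Matrix.vecTail, Function.comp]
    · norm_num [Matrix.det_fin_two, matA, sw23, sw24, tex212, d1, d2, Matrix.vecHead, Matrix.vecTail, Function.comp]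

noncomputable def tex221 : Fin 2 → Fin 2 → Fin 2 → Fin 2 → ℂ := fun i j k l => ![![![![0, 0], ![0, 0]], ![![0, 0], ![0, 0]]], ![![![0, 0], ![0, 1]], ![![0, 1], ![0, 0]]]] i j k l

lemma ex221 : ∃ T : (Fin 4 → Fin 2) → ℂ, T ≠ 0 ∧ rk2 {0, 1} T = 2 ∧ rk2 {0, 2} T = 2 ∧ rk2 {0, 3} T = 1 := by
  refine ⟨fun m => tex221 (m 0) (m 1) (m 2) (m 3), ?_, ?_, ?_, ?_⟩
  · intro h
    have := congrFun h ![1, 0, 1, 1]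
    simp [tex221] at this
  · rw [conv1, show (fun i j k l => (fun m => tex221 (m 0) (m 1) (m 2) (m 3)) ![i, j, k, l]) = tex221 from rfl]
    apply rank_eq_of_certs _ !![0, 0; 0, 0; 0, 1; 1, 0] !![0, 1, 0, 0; 0, 0, 0, 1] ?_ ![2,3] ![1,3] ?_
    · ext r c
      fin_cases r <;> fin_cases c <;> norm_num [Matrix.mul_apply, Fin.sum_univ_succ, matA, sw23, sw24, tex221, d1, d2, Matrix.vecHead, Matrix.vecTail, Function.comp]
    · norm_num [Matrix.det_fin_two, matA, sw23, sw24, tex221, d1, d2, Matrix.vecHead, Matrix.vecTail, Function.comp]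
  · rw [conv2, show (fun i j k l => (fun m => tex221 (m 0) (m 1) (m 2) (m 3)) ![i, j, k, l]) = tex221 from rfl]
    apply rank_eq_of_certs _ !![0, 0; 0, 0; 0, 1; 1, 0] !![0, 1, 0, 0; 0, 0, 0, 1] ?_ ![2,3] ![1,3] ?_
    · ext r c
      fin_cases r <;> fin_cases c <;> norm_num [Matrix.mul_apply, Fin.sum_univ_succ, matA, sw23, sw24, tex221, d1, d2, Matrix.vecHead, Matrix.vecTail, Function.comp]
    · norm_num [Matrix.det_fin_two, matA, sw23, sw24, tex221, d1, d2, Matrix.vecHead, Matrix.vecTail, Function.comp]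
  · rw [conv3, show (fun i j k l => (fun m => tex221 (m 0) (m 1) (m 2) (m 3)) ![i, j, k, l]) = tex221 from rfl]
    apply rank_eq_of_certs _ !![0; 0; 0; 1] !![0, 1, 1, 0] ?_ ![3] ![1] ?_
    · ext r c
      fin_cases r <;> fin_cases c <;> norm_num [Matrix.mul_apply, Fin.sum_univ_succ, matA, sw23, sw24, tex221, d1, d2, Matrix.vecHead, Matrix.vecTail, Function.comp]
    · norm_num [Matrix.det_fin_one, matA, sw23, sw24, tex221, d1, d2, Matrix.vecHead, Matrix.vecTail, Function.comp]

noncomputable def tex222 : Fin 2 → Fin 2 → Fin 2 → Fin 2 → ℂ := fun i j k l => ![![![![0, 0], ![0, 0]], ![![0, 0], ![0, 0]]], ![![![0, 0], ![0, 1]], ![![1, 0], ![0, 0]]]] i j k l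

lemma ex222 : ∃ T : (Fin 4 → Fin 2) → ℂ, T ≠ 0 ∧ rk2 {0, 1} T = 2 ∧ rk2 {0, 2} T = 2 ∧ rk2 {0, 3} T = 2 := by
  refine ⟨fun m => tex222 (m 0) (m 1) (m 2) (m 3), ?_, ?_, ?_, ?_⟩
  · intro h
    have := congrFun h ![1, 0, 1, 1]
    simp [tex222] at this
  · rw [conv1, show (fun i j k l => (fun m => tex222 (m 0) (m 1) (m 2) (m 3)) ![i, j, k, l]) = tex222 from rfl]
    apply rank_eq_of_certs _ !![0, 0; 0, 0; 0, 1; 1, 0] !![1, 0, 0, 0; 0, 0, 0, 1] ?_ ![2,3] ![0,3] ?_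
    · ext r c
      fin_cases r <;> fin_cases c <;> norm_num [Matrix.mul_apply, Fin.sum_univ_succ, matA, sw23, sw24, tex222, d1, d2, Matrix.vecHead, Matrix.vecTail, Function.comp]
    · norm_num [Matrix.det_fin_two, matA, sw23, sw24, tex222, d1, d2, Matrix.vecHead, Matrix.vecTail, Function.comp]
  · rw [conv2, show (fun i j k l => (fun m => tex222 (m 0) (m 1) (m 2) (m 3)) ![i, j, k, l]) = tex222 from rfl]
    apply rank_eq_of_certs _ !![0, 0; 0, 0; 0, 1; 1, 0] !![0, 1, 0, 0; 0, 0, 1, 0] ?_ ![2,3] ![1,2] ?_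
    · ext r c
      fin_cases r <;> fin_cases c <;> norm_num [Matrix.mul_apply, Fin.sum_univ_succ, matA, sw23, sw24, tex222, d1, d2, Matrix.vecHead, Matrix.vecTail, Function.comp]
    · norm_num [Matrix.det_fin_two, matA, sw23, sw24, tex222, d1, d2, Matrix.vecHead, Matrix.vecTail, Function.comp]
  · rw [conv3, show (fun i j k l => (fun m => tex222 (m 0) (m 1) (m 2) (m 3)) ![i, j, k, l]) = tex222 from rfl]
    apply rank_eq_of_certs _ !![0, 0; 0, 0; 1, 0; 0, 1] !![0, 1, 0, 0; 0, 0, 1, 0] ?_ ![2,3] ![1,2] ?_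
    · ext r c
      fin_cases r <;> fin_cases c <;> norm_num [Matrix.mul_apply, Fin.sum_univ_succ, matA, sw23, sw24, tex222, d1, d2, Matrix.vecHead, Matrix.vecTail, Function.comp]
    · norm_num [Matrix.det_fin_two, matA, sw23, sw24, tex222, d1, d2, Matrix.vecHead, Matrix.vecTail, Function.comp]

noncomputable def tex233 : Fin 2 → Fin 2 → Fin 2 → Fin 2 → ℂ := fun i j k l => ![![![![0, 0], ![0, 0]], ![![0, 0], ![0, 1]]], ![![![0, 0], ![0, 1]], ![![1, 0], ![0, 0]]]] i j k l

lemma ex233 : ∃ T : (Fin 4 → Fin 2) → ℂ, T ≠ 0 ∧ rk2 {0, 1} T = 2 ∧ rk2 {0, 2} T = 3 ∧ rk2 {0, 3} T = 3 := by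
  refine ⟨fun m => tex233 (m 0) (m 1) (m 2) (m 3), ?_, ?_, ?_, ?_⟩
  · intro h
    have := congrFun h ![0, 1, 1, 1]
    simp [tex233] at this
  · rw [conv1, show (fun i j k l => (fun m => tex233 (m 0) (m 1) (m 2) (m 3)) ![i, j, k, l]) = tex233 from rfl]
    apply rank_eq_of_certs _ !![0, 0; 0, 1; 0, 1; 1, 0] !![1, 0, 0, 0; 0, 0, 0, 1] ?_ ![1,3] ![0,3] ?_
    · ext r c
      fin_cases r <;> fin_cases c <;> norm_num [Matrix.mul_apply, Fin.sum_univ_succ, matA, sw23, sw24, tex233, d1, d2, Matrix.vecHead, Matrix.vecTail, Function.comp]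
    · norm_num [Matrix.det_fin_two, matA, sw23, sw24, tex233, d1, d2, Matrix.vecHead, Matrix.vecTail, Function.comp]
  · rw [conv2, show (fun i j k l => (fun m => tex233 (m 0) (m 1) (m 2) (m 3)) ![i, j, k, l]) = tex233 from rfl]
    apply rank_eq_of_certs _ !![0, 0, 0; 0, 0, 1; 0, 1, 0; 1, 0, 0] !![0, 1, 0, 0; 0, 0, 1, 0; 0, 0, 0, 1] ?_ ![1,2,3] ![1,2,3] ?_
    · ext r c
      fin_cases r <;> fin_cases c <;> norm_num [Matrix.mul_apply, Fin.sum_univ_succ, matA, sw23, sw24, tex233, d1, d2, Matrix.vecHead, Matrix.vecTail, Function.comp]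
    · norm_num [Matrix.det_fin_three, matA, sw23, sw24, tex233, d1, d2, Matrix.vecHead, Matrix.vecTail, Function.comp]
  · rw [conv3, show (fun i j k l => (fun m => tex233 (m 0) (m 1) (m 2) (m 3)) ![i, j, k, l]) = tex233 from rfl]
    apply rank_eq_of_certs _ !![0, 0, 0; 0, 0, 1; 1, 0, 0; 0, 1, 0] !![0, 1, 0, 0; 0, 0, 1, 0; 0, 0, 0, 1] ?_ ![1,2,3] ![1,2,3] ?_
    · ext r c
      fin_cases r <;> fin_cases c <;> norm_num [Matrix.mul_apply, Fin.sum_univ_succ, matA, sw23, sw24, tex233, d1, d2, Matrix.vecHead, Matrix.vecTail, Function.comp]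
    · norm_num [Matrix.det_fin_three, matA, sw23, sw24, tex233, d1, d2, Matrix.vecHead, Matrix.vecTail, Function.comp]

noncomputable def tex323 : Fin 2 → Fin 2 → Fin 2 → Fin 2 → ℂ := fun i j k l => ![![![![0, 0], ![0, 0]], ![![0, 0], ![0, 1]]], ![![![0, 0], ![1, 0]], ![![0, 1], ![0, 0]]]] i j k l

lemma ex323 : ∃ T : (Fin 4 → Fin 2) → ℂ, T ≠ 0 ∧ rk2 {0, 1} T = 3 ∧ rk2 {0, 2} T = 2 ∧ rk2 {0, 3} T = 3 := by
  refine ⟨fun m => tex323 (m 0) (m 1) (m 2) (m 3), ?_, ?_, ?_, ?_⟩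
  · intro h
    have := congrFun h ![0, 1, 1, 1]
    simp [tex323] at this
  · rw [conv1, show (fun i j k l => (fun m => tex323 (m 0) (m 1) (m 2) (m 3)) ![i, j, k, l]) = tex323 from rfl]
    apply rank_eq_of_certs _ !![0, 0, 0; 0, 0, 1; 0, 1, 0; 1, 0, 0] !![0, 1, 0, 0; 0, 0, 1, 0; 0, 0, 0, 1] ?_ ![1,2,3] ![1,2,3] ?_
    · ext r c
      fin_cases r <;> fin_cases c <;> norm_num [Matrix.mul_apply, Fin.sum_univ_succ, matA, sw23, sw24, tex323, d1, d2, Matrix.vecHead, Matrix.vecTail, Function.comp]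
    · norm_num [Matrix.det_fin_three, matA, sw23, sw24, tex323, d1, d2, Matrix.vecHead, Matrix.vecTail, Function.comp]
  · rw [conv2, show (fun i j k l => (fun m => tex323 (m 0) (m 1) (m 2) (m 3)) ![i, j, k, l]) = tex323 from rfl]
    apply rank_eq_of_certs _ !![0, 0; 0, 1; 0, 1; 1, 0] !![1, 0, 0, 0; 0, 0, 0, 1] ?_ ![1,3] ![0,3] ?_
    · ext r c
      fin_cases r <;> fin_cases c <;> norm_num [Matrix.mul_apply, Fin.sum_univ_succ, matA, sw23, sw24, tex323, d1, d2, Matrix.vecHead, Matrix.vecTail, Function.comp]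
    · norm_num [Matrix.det_fin_two, matA, sw23, sw24, tex323, d1, d2, Matrix.vecHead, Matrix.vecTail, Function.comp]
  · rw [conv3, show (fun i j k l => (fun m => tex323 (m 0) (m 1) (m 2) (m 3)) ![i, j, k, l]) = tex323 from rfl]
    apply rank_eq_of_certs _ !![0, 0, 0; 0, 0, 1; 0, 1, 0; 1, 0, 0] !![0, 1, 0, 0; 0, 0, 1, 0; 0, 0, 0, 1] ?_ ![1,2,3] ![1,2,3] ?_
    · ext r c
      fin_cases r <;> fin_cases c <;> norm_num [Matrix.mul_apply, Fin.sum_univ_succ, matA, sw23, sw24, tex323, d1, d2, Matrix.vecHead, Matrix.vecTail, Function.comp]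
    · norm_num [Matrix.det_fin_three, matA, sw23, sw24, tex323, d1, d2, Matrix.vecHead, Matrix.vecTail, Function.comp]

noncomputable def tex332 : Fin 2 → Fin 2 → Fin 2 → Fin 2 → ℂ := fun i j k l => ![![![![0, 0], ![0, 0]], ![![0, 0], ![0, 1]]], ![![![0, 0], ![1, 0]], ![![1, 0], ![0, 0]]]] i j k l

lemma ex332 : ∃ T : (Fin 4 → Fin 2) → ℂ, T ≠ 0 ∧ rk2 {0, 1} T = 3 ∧ rk2 {0, 2} T = 3 ∧ rk2 {0, 3} T = 2 := by
  refine ⟨fun m => tex332 (m 0) (m 1) (m 2) (m 3), ?_, ?_, ?_, ?_⟩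
  · intro h
    have := congrFun h ![0, 1, 1, 1]
    simp [tex332] at this
  · rw [conv1, show (fun i j k l => (fun m => tex332 (m 0) (m 1) (m 2) (m 3)) ![i, j, k, l]) = tex332 from rfl]
    apply rank_eq_of_certs _ !![0, 0, 0; 0, 0, 1; 0, 1, 0; 1, 0, 0] !![1, 0, 0, 0; 0, 0, 1, 0; 0, 0, 0, 1] ?_ ![1,2,3] ![0,2,3] ?_
    · ext r c
      fin_cases r <;> fin_cases c <;> norm_num [Matrix.mul_apply, Fin.sum_univ_succ, matA, sw23, sw24, tex332, d1, d2, Matrix.vecHead, Matrix.vecTail, Function.comp]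
    · norm_num [Matrix.det_fin_three, matA, sw23, sw24, tex332, d1, d2, Matrix.vecHead, Matrix.vecTail, Function.comp]
  · rw [conv2, show (fun i j k l => (fun m => tex332 (m 0) (m 1) (m 2) (m 3)) ![i, j, k, l]) = tex332 from rfl]
    apply rank_eq_of_certs _ !![0, 0, 0; 0, 0, 1; 0, 1, 0; 1, 0, 0] !![1, 0, 0, 0; 0, 0, 1, 0; 0, 0, 0, 1] ?_ ![1,2,3] ![0,2,3] ?_
    · ext r c
      fin_cases r <;> fin_cases c <;> norm_num [Matrix.mul_apply, Fin.sum_univ_succ, matA, sw23, sw24, tex332, d1, d2, Matrix.vecHead, Matrix.vecTail, Function.comp]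
    · norm_num [Matrix.det_fin_three, matA, sw23, sw24, tex332, d1, d2, Matrix.vecHead, Matrix.vecTail, Function.comp]
  · rw [conv3, show (fun i j k l => (fun m => tex332 (m 0) (m 1) (m 2) (m 3)) ![i, j, k, l]) = tex332 from rfl]
    apply rank_eq_of_certs _ !![0, 0; 0, 1; 1, 0; 0, 0] !![0, 1, 1, 0; 0, 0, 0, 1] ?_ ![1,2] ![1,3] ?_
    · ext r c
      fin_cases r <;> fin_cases c <;> norm_num [Matrix.mul_apply, Fin.sum_univ_succ, matA, sw23, sw24, tex332, d1, d2, Matrix.vecHead, Matrix.vecTail, Function.comp]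
    · norm_num [Matrix.det_fin_two, matA, sw23, sw24, tex332, d1, d2, Matrix.vecHead, Matrix.vecTail, Function.comp]

noncomputable def tex333 : Fin 2 → Fin 2 → Fin 2 → Fin 2 → ℂ := fun i j k l => ![![![![0, 0], ![0, 0]], ![![0, 0], ![0, 1]]], ![![![0, 0], ![1, 0]], ![![1, 1], ![0, 0]]]] i j k l

lemma ex333 : ∃ T : (Fin 4 → Fin 2) → ℂ, T ≠ 0 ∧ rk2 {0, 1} T = 3 ∧ rk2 {0, 2} T = 3 ∧ rk2 {0, 3} T = 3 := by
  refine ⟨fun m => tex333 (m 0) (m 1) (m 2) (m 3), ?_, ?_, ?_, ?_⟩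
  · intro h
    have := congrFun h ![0, 1, 1, 1]
    simp [tex333] at this
  · rw [conv1, show (fun i j k l => (fun m => tex333 (m 0) (m 1) (m 2) (m 3)) ![i, j, k, l]) = tex333 from rfl]
    apply rank_eq_of_certs _ !![0, 0, 0; 0, 0, 1; 0, 1, 0; 1, 0, 0] !![1, 1, 0, 0; 0, 0, 1, 0; 0, 0, 0, 1] ?_ ![1,2,3] ![0,2,3] ?_
    · ext r c
      fin_cases r <;> fin_cases c <;> norm_num [Matrix.mul_apply, Fin.sum_univ_succ, matA, sw23, sw24, tex333, d1, d2, Matrix.vecHead, Matrix.vecTail, Function.comp]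
    · norm_num [Matrix.det_fin_three, matA, sw23, sw24, tex333, d1, d2, Matrix.vecHead, Matrix.vecTail, Function.comp]
  · rw [conv2, show (fun i j k l => (fun m => tex333 (m 0) (m 1) (m 2) (m 3)) ![i, j, k, l]) = tex333 from rfl]
    apply rank_eq_of_certs _ !![0, 0, 0; 0, 0, 1; 0, 1, 1; 1, 0, 0] !![1, 0, 0, 0; 0, 0, 1, 0; 0, 0, 0, 1] ?_ ![1,2,3] ![0,2,3] ?_
    · ext r c
      fin_cases r <;> fin_cases c <;> norm_num [Matrix.mul_apply, Fin.sum_univ_succ, matA, sw23, sw24, tex333, d1, d2, Matrix.vecHead, Matrix.vecTail, Function.comp]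
    · norm_num [Matrix.det_fin_three, matA, sw23, sw24, tex333, d1, d2, Matrix.vecHead, Matrix.vecTail, Function.comp]
  · rw [conv3, show (fun i j k l => (fun m => tex333 (m 0) (m 1) (m 2) (m 3)) ![i, j, k, l]) = tex333 from rfl]
    apply rank_eq_of_certs _ !![0, 0, 0; 0, 0, 1; 1, 1, 0; 1, 0, 0] !![0, 1, 0, 0; 0, 0, 1, 0; 0, 0, 0, 1] ?_ ![1,2,3] ![1,2,3] ?_
    · ext r c
      fin_cases r <;> fin_cases c <;> norm_num [Matrix.mul_apply, Fin.sum_univ_succ, matA, sw23, sw24, tex333, d1, d2, Matrix.vecHead, Matrix.vecTail, Function.comp]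
    · norm_num [Matrix.det_fin_three, matA, sw23, sw24, tex333, d1, d2, Matrix.vecHead, Matrix.vecTail, Function.comp]

noncomputable def tex144 : Fin 2 → Fin 2 → Fin 2 → Fin 2 → ℂ := fun i j k l => ![![![![0, 0], ![0, 0]], ![![0, 1], ![1, 0]]], ![![![0, 1], ![1, 0]], ![![0, 0], ![0, 0]]]] i j k l

lemma ex144 : ∃ T : (Fin 4 → Fin 2) → ℂ, T ≠ 0 ∧ rk2 {0, 1} T = 1 ∧ rk2 {0, 2} T = 4 ∧ rk2 {0, 3} T = 4 := by
  refine ⟨fun m => tex144 (m 0) (m 1) (m 2) (m 3), ?_, ?_, ?_, ?_⟩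
  · intro h
    have := congrFun h ![0, 1, 0, 1]
    simp [tex144] at this
  · rw [conv1, show (fun i j k l => (fun m => tex144 (m 0) (m 1) (m 2) (m 3)) ![i, j, k, l]) = tex144 from rfl]
    apply rank_eq_of_certs _ !![0; 1; 1; 0] !![0, 1, 1, 0] ?_ ![1] ![1] ?_
    · ext r c
      fin_cases r <;> fin_cases c <;> norm_num [Matrix.mul_apply, Fin.sum_univ_succ, matA, sw23, sw24, tex144, d1, d2, Matrix.vecHead, Matrix.vecTail, Function.comp]
    · norm_num [Matrix.det_fin_one, matA, sw23, sw24, tex144, d1, d2, Matrix.vecHead, Matrix.vecTail, Function.comp]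
  · rw [conv2, show (fun i j k l => (fun m => tex144 (m 0) (m 1) (m 2) (m 3)) ![i, j, k, l]) = tex144 from rfl]
    apply rank_eq_of_certs _ !![0, 0, 0, 1; 0, 0, 1, 0; 0, 1, 0, 0; 1, 0, 0, 0] !![1, 0, 0, 0; 0, 1, 0, 0; 0, 0, 1, 0; 0, 0, 0, 1] ?_ ![0,1,2,3] ![0,1,2,3] ?_
    · ext r c
      fin_cases r <;> fin_cases c <;> norm_num [Matrix.mul_apply, Fin.sum_univ_succ, matA, sw23, sw24, tex144, d1, d2, Matrix.vecHead, Matrix.vecTail, Function.comp]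
    · norm_num [det_fin_four', matA, sw23, sw24, tex144, d1, d2, Matrix.vecHead, Matrix.vecTail, Function.comp]
  · rw [conv3, show (fun i j k l => (fun m => tex144 (m 0) (m 1) (m 2) (m 3)) ![i, j, k, l]) = tex144 from rfl]
    apply rank_eq_of_certs _ !![0, 0, 0, 1; 0, 1, 0, 0; 0, 0, 1, 0; 1, 0, 0, 0] !![1, 0, 0, 0; 0, 1, 0, 0; 0, 0, 1, 0; 0, 0, 0, 1] ?_ ![0,1,2,3] ![0,1,2,3] ?_
    · ext r c
      fin_cases r <;> fin_cases c <;> norm_num [Matrix.mul_apply, Fin.sum_univ_succ, matA, sw23, sw24, tex144, d1, d2, Matrix.vecHead, Matrix.vecTail, Function.comp]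
    · norm_num [det_fin_four', matA, sw23, sw24, tex144, d1, d2, Matrix.vecHead, Matrix.vecTail, Function.comp]

noncomputable def tex244 : Fin 2 → Fin 2 → Fin 2 → Fin 2 → ℂ := fun i j k l => ![![![![0, 0], ![0, 0]], ![![0, 1], ![1, 0]]], ![![![1, 0], ![0, 1]], ![![0, 0], ![0, 0]]]] i j k l

lemma ex244 : ∃ T : (Fin 4 → Fin 2) → ℂ, T ≠ 0 ∧ rk2 {0, 1} T = 2 ∧ rk2 {0, 2} T = 4 ∧ rk2 {0, 3} T = 4 := by
  refine ⟨fun m => tex244 (m 0) (m 1) (m 2) (m 3), ?_, ?_, ?_, ?_⟩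
  · intro h
    have := congrFun h ![0, 1, 0, 1]
    simp [tex244] at this
  · rw [conv1, show (fun i j k l => (fun m => tex244 (m 0) (m 1) (m 2) (m 3)) ![i, j, k, l]) = tex244 from rfl]
    apply rank_eq_of_certs _ !![0, 0; 0, 1; 1, 0; 0, 0] !![1, 0, 0, 1; 0, 1, 1, 0] ?_ ![1,2] ![0,1] ?_
    · ext r c
      fin_cases r <;> fin_cases c <;> norm_num [Matrix.mul_apply, Fin.sum_univ_succ, matA, sw23, sw24, tex244, d1, d2, Matrix.vecHead, Matrix.vecTail, Function.comp]
    · norm_num [Matrix.det_fin_two, matA, sw23, sw24, tex244, d1, d2, Matrix.vecHead, Matrix.vecTail, Function.comp]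
  · rw [conv2, show (fun i j k l => (fun m => tex244 (m 0) (m 1) (m 2) (m 3)) ![i, j, k, l]) = tex244 from rfl]
    apply rank_eq_of_certs _ !![0, 0, 0, 1; 0, 0, 1, 0; 1, 0, 0, 0; 0, 1, 0, 0] !![1, 0, 0, 0; 0, 1, 0, 0; 0, 0, 1, 0; 0, 0, 0, 1] ?_ ![0,1,2,3] ![0,1,2,3] ?_
    · ext r c
      fin_cases r <;> fin_cases c <;> norm_num [Matrix.mul_apply, Fin.sum_univ_succ, matA, sw23, sw24, tex244, d1, d2, Matrix.vecHead, Matrix.vecTail, Function.comp]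
    · norm_num [det_fin_four', matA, sw23, sw24, tex244, d1, d2, Matrix.vecHead, Matrix.vecTail, Function.comp]
  · rw [conv3, show (fun i j k l => (fun m => tex244 (m 0) (m 1) (m 2) (m 3)) ![i, j, k, l]) = tex244 from rfl]
    apply rank_eq_of_certs _ !![0, 0, 0, 1; 0, 1, 0, 0; 1, 0, 0, 0; 0, 0, 1, 0] !![1, 0, 0, 0; 0, 1, 0, 0; 0, 0, 1, 0; 0, 0, 0, 1] ?_ ![0,1,2,3] ![0,1,2,3] ?_
    · ext r c
      fin_cases r <;> fin_cases c <;> norm_num [Matrix.mul_apply, Fin.sum_univ_succ, matA, sw23, sw24, tex244, d1, d2, Matrix.vecHead, Matrix.vecTail, Function.comp]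
    · norm_num [det_fin_four', matA, sw23, sw24, tex244, d1, d2, Matrix.vecHead, Matrix.vecTail, Function.comp]

noncomputable def tex344 : Fin 2 → Fin 2 → Fin 2 → Fin 2 → ℂ := fun i j k l => ![![![![0, 0], ![0, 0]], ![![0, 1], ![1, 0]]], ![![![1, 0], ![0, 1]], ![![0, 0], ![0, 1]]]] i j k l

lemma ex344 : ∃ T : (Fin 4 → Fin 2) → ℂ, T ≠ 0 ∧ rk2 {0, 1} T = 3 ∧ rk2 {0, 2} T = 4 ∧ rk2 {0, 3} T = 4 := by
  refine ⟨fun m => tex344 (m 0) (m 1) (m 2) (m 3), ?_, ?_, ?_, ?_⟩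
  · intro h
    have := congrFun h ![0, 1, 0, 1]
    simp [tex344] at this
  · rw [conv1, show (fun i j k l => (fun m => tex344 (m 0) (m 1) (m 2) (m 3)) ![i, j, k, l]) = tex344 from rfl]
    apply rank_eq_of_certs _ !![0, 0, 0; 0, 1, 0; 1, 0, 1; 0, 0, 1] !![1, 0, 0, 0; 0, 1, 1, 0; 0, 0, 0, 1] ?_ ![1,2,3] ![0,1,3] ?_
    · ext r c
      fin_cases r <;> fin_cases c <;> norm_num [Matrix.mul_apply, Fin.sum_univ_succ, matA, sw23, sw24, tex344, d1, d2, Matrix.vecHead, Matrix.vecTail, Function.comp]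
    · norm_num [Matrix.det_fin_three, matA, sw23, sw24, tex344, d1, d2, Matrix.vecHead, Matrix.vecTail, Function.comp]
  · rw [conv2, show (fun i j k l => (fun m => tex344 (m 0) (m 1) (m 2) (m 3)) ![i, j, k, l]) = tex344 from rfl]
    apply rank_eq_of_certs _ !![0, 0, 0, 1; 0, 0, 1, 0; 1, 0, 0, 0; 0, 1, 0, 1] !![1, 0, 0, 0; 0, 1, 0, 0; 0, 0, 1, 0; 0, 0, 0, 1] ?_ ![0,1,2,3] ![0,1,2,3] ?_
    · ext r c
      fin_cases r <;> fin_cases c <;> norm_num [Matrix.mul_apply, Fin.sum_univ_succ, matA, sw23, sw24, tex344, d1, d2, Matrix.vecHead, Matrix.vecTail, Function.comp]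
    · norm_num [det_fin_four', matA, sw23, sw24, tex344, d1, d2, Matrix.vecHead, Matrix.vecTail, Function.comp]
  · rw [conv3, show (fun i j k l => (fun m => tex344 (m 0) (m 1) (m 2) (m 3)) ![i, j, k, l]) = tex344 from rfl]
    apply rank_eq_of_certs _ !![0, 0, 0, 1; 0, 1, 0, 0; 1, 0, 0, 0; 0, 0, 1, 1] !![1, 0, 0, 0; 0, 1, 0, 0; 0, 0, 1, 0; 0, 0, 0, 1] ?_ ![0,1,2,3] ![0,1,2,3] ?_
    · ext r c
      fin_cases r <;> fin_cases c <;> norm_num [Matrix.mul_apply, Fin.sum_univ_succ, matA, sw23, sw24, tex344, d1, d2, Matrix.vecHead, Matrix.vecTail, Function.comp]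
    · norm_num [det_fin_four', matA, sw23, sw24, tex344, d1, d2, Matrix.vecHead, Matrix.vecTail, Function.comp]

noncomputable def tex414 : Fin 2 → Fin 2 → Fin 2 → Fin 2 → ℂ := fun i j k l => ![![![![0, 0], ![0, 1]], ![![0, 0], ![1, 0]]], ![![![0, 1], ![0, 0]], ![![1, 0], ![0, 0]]]] i j k l

lemma ex414 : ∃ T : (Fin 4 → Fin 2) → ℂ, T ≠ 0 ∧ rk2 {0, 1} T = 4 ∧ rk2 {0, 2} T = 1 ∧ rk2 {0, 3} T = 4 := by
  refine ⟨fun m => tex414 (m 0) (m 1) (m 2) (m 3), ?_, ?_, ?_, ?_⟩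
  · intro h
    have := congrFun h ![0, 0, 1, 1]
    simp [tex414] at this
  · rw [conv1, show (fun i j k l => (fun m => tex414 (m 0) (m 1) (m 2) (m 3)) ![i, j, k, l]) = tex414 from rfl]
    apply rank_eq_of_certs _ !![0, 0, 0, 1; 0, 0, 1, 0; 0, 1, 0, 0; 1, 0, 0, 0] !![1, 0, 0, 0; 0, 1, 0, 0; 0, 0, 1, 0; 0, 0, 0, 1] ?_ ![0,1,2,3] ![0,1,2,3] ?_
    · ext r c
      fin_cases r <;> fin_cases c <;> norm_num [Matrix.mul_apply, Fin.sum_univ_succ, matA, sw23, sw24, tex414, d1, d2, Matrix.vecHead, Matrix.vecTail, Function.comp]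
    · norm_num [det_fin_four', matA, sw23, sw24, tex414, d1, d2, Matrix.vecHead, Matrix.vecTail, Function.comp]
  · rw [conv2, show (fun i j k l => (fun m => tex414 (m 0) (m 1) (m 2) (m 3)) ![i, j, k, l]) = tex414 from rfl]
    apply rank_eq_of_certs _ !![0; 1; 1; 0] !![0, 1, 1, 0] ?_ ![1] ![1] ?_
    · ext r c
      fin_cases r <;> fin_cases c <;> norm_num [Matrix.mul_apply, Fin.sum_univ_succ, matA, sw23, sw24, tex414, d1, d2, Matrix.vecHead, Matrix.vecTail, Function.comp]
    · norm_num [Matrix.det_fin_one, matA, sw23, sw24, tex414, d1, d2, Matrix.vecHead, Matrix.vecTail, Function.comp]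
  · rw [conv3, show (fun i j k l => (fun m => tex414 (m 0) (m 1) (m 2) (m 3)) ![i, j, k, l]) = tex414 from rfl]
    apply rank_eq_of_certs _ !![0, 0, 0, 1; 0, 0, 1, 0; 0, 1, 0, 0; 1, 0, 0, 0] !![1, 0, 0, 0; 0, 1, 0, 0; 0, 0, 1, 0; 0, 0, 0, 1] ?_ ![0,1,2,3] ![0,1,2,3] ?_
    · ext r c
      fin_cases r <;> fin_cases c <;> norm_num [Matrix.mul_apply, Fin.sum_univ_succ, matA, sw23, sw24, tex414, d1, d2, Matrix.vecHead, Matrix.vecTail, Function.comp]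
    · norm_num [det_fin_four', matA, sw23, sw24, tex414, d1, d2, Matrix.vecHead, Matrix.vecTail, Function.comp]

noncomputable def tex424 : Fin 2 → Fin 2 → Fin 2 → Fin 2 → ℂ := fun i j k l => ![![![![0, 0], ![0, 1]], ![![0, 0], ![1, 0]]], ![![![1, 0], ![0, 0]], ![![0, 1], ![0, 0]]]] i j k l

lemma ex424 : ∃ T : (Fin 4 → Fin 2) → ℂ, T ≠ 0 ∧ rk2 {0, 1} T = 4 ∧ rk2 {0, 2} T = 2 ∧ rk2 {0, 3} T = 4 := by
  refine ⟨fun m => tex424 (m 0) (m 1) (m 2) (m 3), ?_, ?_, ?_, ?_⟩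
  · intro h
    have := congrFun h ![0, 0, 1, 1]
    simp [tex424] at this
  · rw [conv1, show (fun i j k l => (fun m => tex424 (m 0) (m 1) (m 2) (m 3)) ![i, j, k, l]) = tex424 from rfl]
    apply rank_eq_of_certs _ !![0, 0, 0, 1; 0, 0, 1, 0; 1, 0, 0, 0; 0, 1, 0, 0] !![1, 0, 0, 0; 0, 1, 0, 0; 0, 0, 1, 0; 0, 0, 0, 1] ?_ ![0,1,2,3] ![0,1,2,3] ?_
    · ext r c
      fin_cases r <;> fin_cases c <;> norm_num [Matrix.mul_apply, Fin.sum_univ_succ, matA, sw23, sw24, tex424, d1, d2, Matrix.vecHead, Matrix.vecTail, Function.comp]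
    · norm_num [det_fin_four', matA, sw23, sw24, tex424, d1, d2, Matrix.vecHead, Matrix.vecTail, Function.comp]
  · rw [conv2, show (fun i j k l => (fun m => tex424 (m 0) (m 1) (m 2) (m 3)) ![i, j, k, l]) = tex424 from rfl]
    apply rank_eq_of_certs _ !![0, 0; 0, 1; 1, 0; 0, 0] !![1, 0, 0, 1; 0, 1, 1, 0] ?_ ![1,2] ![0,1] ?_
    · ext r c
      fin_cases r <;> fin_cases c <;> norm_num [Matrix.mul_apply, Fin.sum_univ_succ, matA, sw23, sw24, tex424, d1, d2, Matrix.vecHead, Matrix.vecTail, Function.comp]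
    · norm_num [Matrix.det_fin_two, matA, sw23, sw24, tex424, d1, d2, Matrix.vecHead, Matrix.vecTail, Function.comp]
  · rw [conv3, show (fun i j k l => (fun m => tex424 (m 0) (m 1) (m 2) (m 3)) ![i, j, k, l]) = tex424 from rfl]
    apply rank_eq_of_certs _ !![0, 0, 0, 1; 0, 0, 1, 0; 1, 0, 0, 0; 0, 1, 0, 0] !![1, 0, 0, 0; 0, 1, 0, 0; 0, 0, 1, 0; 0, 0, 0, 1] ?_ ![0,1,2,3] ![0,1,2,3] ?_
    · ext r c
      fin_cases r <;> fin_cases c <;> norm_num [Matrix.mul_apply, Fin.sum_univ_succ, matA, sw23, sw24, tex424, d1, d2, Matrix.vecHead, Matrix.vecTail, Function.comp]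
    · norm_num [det_fin_four', matA, sw23, sw24, tex424, d1, d2, Matrix.vecHead, Matrix.vecTail, Function.comp]

noncomputable def tex434 : Fin 2 → Fin 2 → Fin 2 → Fin 2 → ℂ := fun i j k l => ![![![![0, 0], ![0, 1]], ![![0, 0], ![1, 0]]], ![![![1, 0], ![0, 0]], ![![0, 1], ![0, 1]]]] i j k l

lemma ex434 : ∃ T : (Fin 4 → Fin 2) → ℂ, T ≠ 0 ∧ rk2 {0, 1} T = 4 ∧ rk2 {0, 2} T = 3 ∧ rk2 {0, 3} T = 4 := by
  refine ⟨fun m => tex434 (m 0) (m 1) (m 2) (m 3), ?_, ?_, ?_, ?_⟩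
  · intro h
    have := congrFun h ![0, 0, 1, 1]
    simp [tex434] at this
  · rw [conv1, show (fun i j k l => (fun m => tex434 (m 0) (m 1) (m 2) (m 3)) ![i, j, k, l]) = tex434 from rfl]
    apply rank_eq_of_certs _ !![0, 0, 0, 1; 0, 0, 1, 0; 1, 0, 0, 0; 0, 1, 0, 1] !![1, 0, 0, 0; 0, 1, 0, 0; 0, 0, 1, 0; 0, 0, 0, 1] ?_ ![0,1,2,3] ![0,1,2,3] ?_
    · ext r c
      fin_cases r <;> fin_cases c <;> norm_num [Matrix.mul_apply, Fin.sum_univ_succ, matA, sw23, sw24, tex434, d1, d2, Matrix.vecHead, Matrix.vecTail, Function.comp]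
    · norm_num [det_fin_four', matA, sw23, sw24, tex434, d1, d2, Matrix.vecHead, Matrix.vecTail, Function.comp]
  · rw [conv2, show (fun i j k l => (fun m => tex434 (m 0) (m 1) (m 2) (m 3)) ![i, j, k, l]) = tex434 from rfl]
    apply rank_eq_of_certs _ !![0, 0, 0; 0, 1, 0; 1, 0, 1; 0, 0, 1] !![1, 0, 0, 0; 0, 1, 1, 0; 0, 0, 0, 1] ?_ ![1,2,3] ![0,1,3] ?_
    · ext r c
      fin_cases r <;> fin_cases c <;> norm_num [Matrix.mul_apply, Fin.sum_univ_succ, matA, sw23, sw24, tex434, d1, d2, Matrix.vecHead, Matrix.vecTail, Function.comp]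
    · norm_num [Matrix.det_fin_three, matA, sw23, sw24, tex434, d1, d2, Matrix.vecHead, Matrix.vecTail, Function.comp]
  · rw [conv3, show (fun i j k l => (fun m => tex434 (m 0) (m 1) (m 2) (m 3)) ![i, j, k, l]) = tex434 from rfl]
    apply rank_eq_of_certs _ !![0, 0, 0, 1; 0, 0, 1, 0; 1, 0, 0, 0; 0, 1, 0, 1] !![1, 0, 0, 0; 0, 1, 0, 0; 0, 0, 1, 0; 0, 0, 0, 1] ?_ ![0,1,2,3] ![0,1,2,3] ?_
    · ext r c
      fin_cases r <;> fin_cases c <;> norm_num [Matrix.mul_apply, Fin.sum_univ_succ, matA, sw23, sw24, tex434, d1, d2, Matrix.vecHead, Matrix.vecTail, Function.comp]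
    · norm_num [det_fin_four', matA, sw23, sw24, tex434, d1, d2, Matrix.vecHead, Matrix.vecTail, Function.comp]

noncomputable def tex441 : Fin 2 → Fin 2 → Fin 2 → Fin 2 → ℂ := fun i j k l => ![![![![0, 0], ![0, 1]], ![![0, 1], ![0, 0]]], ![![![0, 0], ![1, 0]], ![![1, 0], ![0, 0]]]] i j k l

lemma ex441 : ∃ T : (Fin 4 → Fin 2) → ℂ, T ≠ 0 ∧ rk2 {0, 1} T = 4 ∧ rk2 {0, 2} T = 4 ∧ rk2 {0, 3} T = 1 := by
  refine ⟨fun m => tex441 (m 0) (m 1) (m 2) (m 3), ?_, ?_, ?_, ?_⟩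
  · intro h
    have := congrFun h ![0, 0, 1, 1]
    simp [tex441] at this
  · rw [conv1, show (fun i j k l => (fun m => tex441 (m 0) (m 1) (m 2) (m 3)) ![i, j, k, l]) = tex441 from rfl]
    apply rank_eq_of_certs _ !![0, 0, 0, 1; 0, 1, 0, 0; 0, 0, 1, 0; 1, 0, 0, 0] !![1, 0, 0, 0; 0, 1, 0, 0; 0, 0, 1, 0; 0, 0, 0, 1] ?_ ![0,1,2,3] ![0,1,2,3] ?_
    · ext r c
      fin_cases r <;> fin_cases c <;> norm_num [Matrix.mul_apply, Fin.sum_univ_succ, matA, sw23, sw24, tex441, d1, d2, Matrix.vecHead, Matrix.vecTail, Function.comp]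
    · norm_num [det_fin_four', matA, sw23, sw24, tex441, d1, d2, Matrix.vecHead, Matrix.vecTail, Function.comp]
  · rw [conv2, show (fun i j k l => (fun m => tex441 (m 0) (m 1) (m 2) (m 3)) ![i, j, k, l]) = tex441 from rfl]
    apply rank_eq_of_certs _ !![0, 0, 0, 1; 0, 1, 0, 0; 0, 0, 1, 0; 1, 0, 0, 0] !![1, 0, 0, 0; 0, 1, 0, 0; 0, 0, 1, 0; 0, 0, 0, 1] ?_ ![0,1,2,3] ![0,1,2,3] ?_
    · ext r c
      fin_cases r <;> fin_cases c <;> norm_num [Matrix.mul_apply, Fin.sum_univ_succ, matA, sw23, sw24, tex441, d1, d2, Matrix.vecHead, Matrix.vecTail, Function.comp]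
    · norm_num [det_fin_four', matA, sw23, sw24, tex441, d1, d2, Matrix.vecHead, Matrix.vecTail, Function.comp]
  · rw [conv3, show (fun i j k l => (fun m => tex441 (m 0) (m 1) (m 2) (m 3)) ![i, j, k, l]) = tex441 from rfl]
    apply rank_eq_of_certs _ !![0; 1; 1; 0] !![0, 1, 1, 0] ?_ ![1] ![1] ?_
    · ext r c
      fin_cases r <;> fin_cases c <;> norm_num [Matrix.mul_apply, Fin.sum_univ_succ, matA, sw23, sw24, tex441, d1, d2, Matrix.vecHead, Matrix.vecTail, Function.comp]
    · norm_num [Matrix.det_fin_one, matA, sw23, sw24, tex441, d1, d2, Matrix.vecHead, Matrix.vecTail, Function.comp]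

noncomputable def tex442 : Fin 2 → Fin 2 → Fin 2 → Fin 2 → ℂ := fun i j k l => ![![![![0, 0], ![0, 1]], ![![0, 1], ![0, 0]]], ![![![1, 0], ![0, 0]], ![![0, 0], ![1, 0]]]] i j k l

lemma ex442 : ∃ T : (Fin 4 → Fin 2) → ℂ, T ≠ 0 ∧ rk2 {0, 1} T = 4 ∧ rk2 {0, 2} T = 4 ∧ rk2 {0, 3} T = 2 := by
  refine ⟨fun m => tex442 (m 0) (m 1) (m 2) (m 3), ?_, ?_, ?_, ?_⟩
  · intro h
    have := congrFun h ![0, 0, 1, 1]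
    simp [tex442] at this
  · rw [conv1, show (fun i j k l => (fun m => tex442 (m 0) (m 1) (m 2) (m 3)) ![i, j, k, l]) = tex442 from rfl]
    apply rank_eq_of_certs _ !![0, 0, 0, 1; 0, 1, 0, 0; 1, 0, 0, 0; 0, 0, 1, 0] !![1, 0, 0, 0; 0, 1, 0, 0; 0, 0, 1, 0; 0, 0, 0, 1] ?_ ![0,1,2,3] ![0,1,2,3] ?_
    · ext r c
      fin_cases r <;> fin_cases c <;> norm_num [Matrix.mul_apply, Fin.sum_univ_succ, matA, sw23, sw24, tex442, d1, d2, Matrix.vecHead, Matrix.vecTail, Function.comp]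
    · norm_num [det_fin_four', matA, sw23, sw24, tex442, d1, d2, Matrix.vecHead, Matrix.vecTail, Function.comp]
  · rw [conv2, show (fun i j k l => (fun m => tex442 (m 0) (m 1) (m 2) (m 3)) ![i, j, k, l]) = tex442 from rfl]
    apply rank_eq_of_certs _ !![0, 0, 0, 1; 0, 1, 0, 0; 1, 0, 0, 0; 0, 0, 1, 0] !![1, 0, 0, 0; 0, 1, 0, 0; 0, 0, 1, 0; 0, 0, 0, 1] ?_ ![0,1,2,3] ![0,1,2,3] ?_
    · ext r c
      fin_cases r <;> fin_cases c <;> norm_num [Matrix.mul_apply, Fin.sum_univ_succ, matA, sw23, sw24, tex442, d1, d2, Matrix.vecHead, Matrix.vecTail, Function.comp]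
    · norm_num [det_fin_four', matA, sw23, sw24, tex442, d1, d2, Matrix.vecHead, Matrix.vecTail, Function.comp]
  · rw [conv3, show (fun i j k l => (fun m => tex442 (m 0) (m 1) (m 2) (m 3)) ![i, j, k, l]) = tex442 from rfl]
    apply rank_eq_of_certs _ !![0, 0; 0, 1; 1, 0; 0, 0] !![1, 0, 0, 1; 0, 1, 1, 0] ?_ ![1,2] ![0,1] ?_
    · ext r c
      fin_cases r <;> fin_cases c <;> norm_num [Matrix.mul_apply, Fin.sum_univ_succ, matA, sw23, sw24, tex442, d1, d2, Matrix.vecHead, Matrix.vecTail, Function.comp]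
    · norm_num [Matrix.det_fin_two, matA, sw23, sw24, tex442, d1, d2, Matrix.vecHead, Matrix.vecTail, Function.comp]

noncomputable def tex443 : Fin 2 → Fin 2 → Fin 2 → Fin 2 → ℂ := fun i j k l => ![![![![0, 0], ![0, 1]], ![![0, 1], ![0, 0]]], ![![![1, 0], ![0, 0]], ![![0, 0], ![1, 1]]]] i j k l

lemma ex443 : ∃ T : (Fin 4 → Fin 2) → ℂ, T ≠ 0 ∧ rk2 {0, 1} T = 4 ∧ rk2 {0, 2} T = 4 ∧ rk2 {0, 3} T = 3 := by
  refine ⟨fun m => tex443 (m 0) (m 1) (m 2) (m 3), ?_, ?_, ?_, ?_⟩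
  · intro h
    have := congrFun h ![0, 0, 1, 1]
    simp [tex443] at this
  · rw [conv1, show (fun i j k l => (fun m => tex443 (m 0) (m 1) (m 2) (m 3)) ![i, j, k, l]) = tex443 from rfl]
    apply rank_eq_of_certs _ !![0, 0, 0, 1; 0, 1, 0, 0; 1, 0, 0, 0; 0, 0, 1, 1] !![1, 0, 0, 0; 0, 1, 0, 0; 0, 0, 1, 0; 0, 0, 0, 1] ?_ ![0,1,2,3] ![0,1,2,3] ?_
    · ext r c
      fin_cases r <;> fin_cases c <;> norm_num [Matrix.mul_apply, Fin.sum_univ_succ, matA, sw23, sw24, tex443, d1, d2, Matrix.vecHead, Matrix.vecTail, Function.comp]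
    · norm_num [det_fin_four', matA, sw23, sw24, tex443, d1, d2, Matrix.vecHead, Matrix.vecTail, Function.comp]
  · rw [conv2, show (fun i j k l => (fun m => tex443 (m 0) (m 1) (m 2) (m 3)) ![i, j, k, l]) = tex443 from rfl]
    apply rank_eq_of_certs _ !![0, 0, 0, 1; 0, 1, 0, 0; 1, 0, 0, 0; 0, 0, 1, 1] !![1, 0, 0, 0; 0, 1, 0, 0; 0, 0, 1, 0; 0, 0, 0, 1] ?_ ![0,1,2,3] ![0,1,2,3] ?_
    · ext r c
      fin_cases r <;> fin_cases c <;> norm_num [Matrix.mul_apply, Fin.sum_univ_succ, matA, sw23, sw24, tex443, d1, d2, Matrix.vecHead, Matrix.vecTail, Function.comp]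
    · norm_num [det_fin_four', matA, sw23, sw24, tex443, d1, d2, Matrix.vecHead, Matrix.vecTail, Function.comp]
  · rw [conv3, show (fun i j k l => (fun m => tex443 (m 0) (m 1) (m 2) (m 3)) ![i, j, k, l]) = tex443 from rfl]
    apply rank_eq_of_certs _ !![0, 0, 0; 0, 1, 0; 1, 0, 1; 0, 0, 1] !![1, 0, 0, 0; 0, 1, 1, 0; 0, 0, 0, 1] ?_ ![1,2,3] ![0,1,3] ?_
    · ext r c
      fin_cases r <;> fin_cases c <;> norm_num [Matrix.mul_apply, Fin.sum_univ_succ, matA, sw23, sw24, tex443, d1, d2, Matrix.vecHead, Matrix.vecTail, Function.comp]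
    · norm_num [Matrix.det_fin_three, matA, sw23, sw24, tex443, d1, d2, Matrix.vecHead, Matrix.vecTail, Function.comp]

noncomputable def tex444 : Fin 2 → Fin 2 → Fin 2 → Fin 2 → ℂ := fun i j k l => ![![![![0, 0], ![0, 1]], ![![0, 1], ![1, 0]]], ![![![1, 0], ![1, 0]], ![![1, 1], ![0, 0]]]] i j k l

lemma ex444 : ∃ T : (Fin 4 → Fin 2) → ℂ, T ≠ 0 ∧ rk2 {0, 1} T = 4 ∧ rk2 {0, 2} T = 4 ∧ rk2 {0, 3} T = 4 := by
  refine ⟨fun m => tex444 (m 0) (m 1) (m 2) (m 3), ?_, ?_, ?_, ?_⟩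
  · intro h
    have := congrFun h ![0, 0, 1, 1]
    simp [tex444] at this
  · rw [conv1, show (fun i j k l => (fun m => tex444 (m 0) (m 1) (m 2) (m 3)) ![i, j, k, l]) = tex444 from rfl]
    apply rank_eq_of_certs _ !![0, 0, 0, 1; 0, 1, 1, 0; 1, 0, 1, 0; 1, 1, 0, 0] !![1, 0, 0, 0; 0, 1, 0, 0; 0, 0, 1, 0; 0, 0, 0, 1] ?_ ![0,1,2,3] ![0,1,2,3] ?_
    · ext r c
      fin_cases r <;> fin_cases c <;> norm_num [Matrix.mul_apply, Fin.sum_univ_succ, matA, sw23, sw24, tex444, d1, d2, Matrix.vecHead, Matrix.vecTail, Function.comp]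
    · norm_num [det_fin_four', matA, sw23, sw24, tex444, d1, d2, Matrix.vecHead, Matrix.vecTail, Function.comp]
  · rw [conv2, show (fun i j k l => (fun m => tex444 (m 0) (m 1) (m 2) (m 3)) ![i, j, k, l]) = tex444 from rfl]
    apply rank_eq_of_certs _ !![0, 0, 0, 1; 0, 1, 1, 0; 1, 0, 1, 1; 1, 0, 0, 0] !![1, 0, 0, 0; 0, 1, 0, 0; 0, 0, 1, 0; 0, 0, 0, 1] ?_ ![0,1,2,3] ![0,1,2,3] ?_
    · ext r c
      fin_cases r <;> fin_cases c <;> norm_num [Matrix.mul_apply, Fin.sum_univ_succ, matA, sw23, sw24, tex444, d1, d2, Matrix.vecHead, Matrix.vecTail, Function.comp]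
    · norm_num [det_fin_four', matA, sw23, sw24, tex444, d1, d2, Matrix.vecHead, Matrix.vecTail, Function.comp]
  · rw [conv3, show (fun i j k l => (fun m => tex444 (m 0) (m 1) (m 2) (m 3)) ![i, j, k, l]) = tex444 from rfl]
    apply rank_eq_of_certs _ !![0, 0, 0, 1; 0, 1, 1, 0; 1, 1, 1, 0; 0, 1, 0, 0] !![1, 0, 0, 0; 0, 1, 0, 0; 0, 0, 1, 0; 0, 0, 0, 1] ?_ ![0,1,2,3] ![0,1,2,3] ?_
    · ext r c
      fin_cases r <;> fin_cases c <;> norm_num [Matrix.mul_apply, Fin.sum_univ_succ, matA, sw23, sw24, tex444, d1, d2, Matrix.vecHead, Matrix.vecTail, Function.comp]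
    · norm_num [det_fin_four', matA, sw23, sw24, tex444, d1, d2, Matrix.vecHead, Matrix.vecTail, Function.comp]

lemma maxtwice {a b c : ℕ} (h1 : a ≤ max b c) (h2 : b ≤ max a c) (h3 : c ≤ max a b) :
    MaxAttainedTwice a b c := by
  unfold MaxAttainedTwice; omega

end Aux

/-- (i) for every nonzero four-qubit tensor the maximum of the
three two-multirank entries is attained at least twice; (ii) a triple
`(a,b,c)` with `1 ≤ a,b,c ≤ 4` is the two-multirank of some nonzero four-qubit
tensor iff its maximum is attained at least twice and it is not a permutation
of `(1,3,3)`. -/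
theorem fourQubit_twoMultirank :
    (∀ T : (Fin 4 → Fin 2) → ℂ, T ≠ 0 →
      MaxAttainedTwice (rk2 {0, 1} T) (rk2 {0, 2} T) (rk2 {0, 3} T)) ∧
    (∀ a b c : ℕ, 1 ≤ a → a ≤ 4 → 1 ≤ b → b ≤ 4 → 1 ≤ c → c ≤ 4 →
      ((∃ T : (Fin 4 → Fin 2) → ℂ, T ≠ 0 ∧
          rk2 {0, 1} T = a ∧ rk2 {0, 2} T = b ∧ rk2 {0, 3} T = c) ↔
        (MaxAttainedTwice a b c ∧ ¬ IsPerm133 a b c))) := by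
  constructor
  · intro T _hT
    rw [conv1, conv2, conv3]
    exact maxtwice (core _) (coreB _) (coreC _)
  · intro a b c ha1 ha4 hb1 hb4 hc1 hc4
    constructor
    · rintro ⟨T, _hT, hA, hB, hC⟩
      rw [conv1] at hA; rw [conv2] at hB; rw [conv3] at hC
      constructor
      · rw [← hA, ← hB, ← hC]
        exact maxtwice (core _) (coreB _) (coreC _)
      · rintro (⟨ha, hb, hc⟩ | ⟨ha, hb, hc⟩ | ⟨ha, hb, hc⟩)
        · exact excl _ (le_of_eq (hA.trans ha)) (hB.trans hb)
        · have h := excl (sw23 (fun i j k l => T ![i, j, k, l])) (le_of_eq (hB.trans hb))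
          rw [show sw23 (sw23 (fun i j k l => T ![i, j, k, l])) = (fun i j k l => T ![i, j, k, l]) from rfl] at h
          exact h (hA.trans ha)
        · have h := excl (sw24 (fun i j k l => T ![i, j, k, l])) (le_of_eq (hC.trans hc))
          rw [show sw23 (sw24 (fun i j k l => T ![i, j, k, l])) = swc (sw23 (fun i j k l => T ![i, j, k, l])) from rfl,
            rank_matA_swc] at h
          exact h (hB.trans hb)
    · rintro ⟨hmax, hnot⟩
      interval_cases a <;> interval_cases b <;> interval_cases c <;>
        first
          | exact absurd hmax (by unfold MaxAttainedTwice; omega)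
          | exact absurd (by unfold IsPerm133; omega) hnot
          | exact ex111 | exact ex122 | exact ex144
          | exact ex212 | exact ex221 | exact ex222 | exact ex233 | exact ex244
          | exact ex323 | exact ex332 | exact ex333 | exact ex344
          | exact ex414 | exact ex424 | exact ex434 | exact ex441 | exact ex442 | exact ex443 | exact ex444

end QIT
end

section
/- For every n ≥ 4, every symmetric tensor T ∈ (ℂ²)^{⊗n} has border rank at most ⌈(n+1)/2⌉. Equivalently, no symmetric entangled n-qubit state lies in the proper locus σ_k ∖ σ_{k−1} of the k-secant variety of the Segre variety of (ℙ¹)^{×n} for k > ⌈(n+1)/2⌉. -/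
namespace QIT

/- ========= Auxiliary material for the proof ========= -/

namespace BorderRankAux

open Polynomial Filter Topology Matrix

noncomputable section

/-- Solution of a linear recurrence of order `r` with coefficients `a` and
initial values `init`. -/
def lrec (r : ℕ) (a : Fin r → ℂ) (init : ℕ → ℂ) (k : ℕ) : ℂ :=
  if h : k < r then init k
  else ∑ j : Fin r, a j * lrec r a init (k - r + j)
termination_by k
decreasing_by have := j.isLt; omega

theorem lrec_lt {r : ℕ} {a : Fin r → ℂ} {init : ℕ → ℂ} {k : ℕ} (h : k < r) :
    lrec r a init k = init k := by rw [lrec]; simp [h]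

theorem lrec_ge {r : ℕ} {a : Fin r → ℂ} {init : ℕ → ℂ} {k : ℕ} (h : ¬ k < r) :
    lrec r a init k = ∑ j : Fin r, a j * lrec r a init (k - r + j) := by
  rw [lrec]; simp [h]

theorem cont_coeff_prod {r : ℕ} (S : Finset (Fin r)) (j : ℕ) :
    Continuous fun t : Fin r → ℂ => (∏ p ∈ S, (X - C (t p))).coeff j := by
  induction S using Finset.induction generalizing j with
  | empty => simpa using continuous_const
  | @insert a s ha ih =>
    have key : ∀ t : Fin r → ℂ,
        (∏ p ∈ insert a s, (X - C (t p))).coeff j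
        = (if j = 0 then 0 else (∏ p ∈ s, (X - C (t p))).coeff (j-1))
          - t a * (∏ p ∈ s, (X - C (t p))).coeff j := by
      intro t
      rw [Finset.prod_insert ha, sub_mul, coeff_sub, coeff_C_mul]
      congr 1
      cases j with
      | zero => simp [coeff_zero, mul_coeff_zero]
      | succ m => simp [coeff_X_mul]
    simp only [key]
    apply Continuous.sub
    · by_cases hj : j = 0
      · simpa [hj] using continuous_const
      · simpa [hj] using ih (j-1)
    · exact (continuous_apply a).mul (ih j)

/-- (Negatives of) the coefficients of `∏ (X - t p)`. -/
def acoef (r : ℕ) (t : Fin r → ℂ) (j : Fin r) : ℂ :=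
  -((∏ p, (X - C (t p))).coeff j)

theorem cont_acoef {r : ℕ} (j : Fin r) : Continuous fun t : Fin r → ℂ => acoef r t j :=
  (cont_coeff_prod Finset.univ j).neg

theorem pow_eq_acoef {r : ℕ} (t : Fin r → ℂ) (p₀ : Fin r) :
    t p₀ ^ r = ∑ j : Fin r, acoef r t j * t p₀ ^ (j : ℕ) := by
  set q : Polynomial ℂ := ∏ p, (X - C (t p)) with hq
  have hmon : q.Monic := monic_prod_of_monic _ _ fun p _ => monic_X_sub_C (t p)
  have hdeg : q.natDegree = r := by
    rw [hq, natDegree_prod _ _ fun p _ => X_sub_C_ne_zero (t p)]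
    simp
  have heval : q.eval (t p₀) = 0 := by
    rw [hq, eval_prod]
    exact Finset.prod_eq_zero (Finset.mem_univ p₀) (by simp)
  rw [eval_eq_sum_range, hdeg, Finset.sum_range_succ] at heval
  have hlead : q.coeff r = 1 := by
    have := hmon.coeff_natDegree
    rwa [hdeg] at this
  rw [hlead, one_mul] at heval
  have : t p₀ ^ r = ∑ i ∈ Finset.range r, -(q.coeff i) * t p₀ ^ i := by
    have := heval
    rw [← neg_eq_iff_add_eq_zero] at this
    rw [← this, ← Finset.sum_neg_distrib]
    exact Finset.sum_congr rfl fun i _ => by ring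
  rw [this, ← Fin.sum_univ_eq_sum_range (fun i => -(q.coeff i) * t p₀ ^ i) r]
  rfl

theorem lrec_continuous {r : ℕ} (init : ℕ → ℂ) {X : Type*} [TopologicalSpace X]
    (A : X → Fin r → ℂ) (hA : ∀ j, Continuous fun x => A x j) (k : ℕ) :
    Continuous fun x => lrec r (A x) init k := by
  induction k using Nat.strong_induction_on with
  | _ k ih =>
    by_cases h : k < r
    · simpa [lrec_lt h] using continuous_const
    · simp only [lrec_ge h]
      apply continuous_finset_sum
      intro j _
      exact (hA j).mul (ih (k - r + j) (by have := j.isLt; omega))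

/-- Moment sequence of nodes `t` with weights `lam`. -/
def mom (r : ℕ) (t lam : Fin r → ℂ) (k : ℕ) : ℂ := ∑ p, lam p * t p ^ k

theorem exists_lam {r : ℕ} (t : Fin r → ℂ) (ht : Function.Injective t) (init : ℕ → ℂ) :
    ∃ lam : Fin r → ℂ, ∀ k, lrec r (acoef r t) init k = mom r t lam k := by
  set V := (Matrix.vandermonde t)ᵀ with hV
  have hdet : IsUnit V.det := by
    rw [hV, Matrix.det_transpose]
    exact (Matrix.det_vandermonde_ne_zero_iff.mpr ht).isUnit
  set lam := V⁻¹ *ᵥ (fun j : Fin r => init j) with hlam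
  have hsolve : V *ᵥ lam = fun j : Fin r => init j := by
    rw [hlam, Matrix.mulVec_mulVec, Matrix.mul_nonsing_inv _ hdet, Matrix.one_mulVec]
  refine ⟨lam, fun k => ?_⟩
  induction k using Nat.strong_induction_on with
  | _ k ih =>
    by_cases h : k < r
    · rw [lrec_lt h]
      have := congrFun hsolve ⟨k, h⟩
      simp only [Matrix.mulVec, dotProduct, hV, Matrix.transpose_apply,
        Matrix.vandermonde_apply] at this
      rw [mom, ← this]
      exact Finset.sum_congr rfl fun p _ => mul_comm _ _
    · rw [lrec_ge h]
      have hik : ∀ j : Fin r, lrec r (acoef r t) init (k - r + j) = mom r t lam (k - r + j) :=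
        fun j => ih _ (by have := j.isLt; omega)
      simp only [hik, mom]
      simp_rw [Finset.mul_sum]
      rw [Finset.sum_comm]
      refine Finset.sum_congr rfl fun p _ => ?_
      have : ∑ j : Fin r, acoef r t j * (lam p * t p ^ (k - r + (j:ℕ)))
          = lam p * (t p ^ (k - r) * ∑ j : Fin r, acoef r t j * t p ^ (j:ℕ)) := by
        rw [Finset.mul_sum, Finset.mul_sum]
        refine Finset.sum_congr rfl fun j _ => ?_
        rw [pow_add]; ring
      rw [this, ← pow_eq_acoef t p, ← pow_add]
      congr 2
      omega

theorem ev_notMem {B : Set ℂ} (h : B.Finite) : ∀ᶠ z in 𝓝[≠] (0:ℂ), z ∉ B := by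
  have h1 : IsClosed (B \ {0}) := (h.diff).isClosed
  have h2 : (0:ℂ) ∉ B \ {0} := fun hx => hx.2 rfl
  have h3 : ∀ᶠ z in 𝓝 (0:ℂ), z ∉ B \ {0} :=
    h1.isOpen_compl.eventually_mem (by simpa using h2)
  filter_upwards [eventually_nhdsWithin_of_eventually_nhds h3,
    self_mem_nhdsWithin] with z hz hz0
  intro hzB
  exact hz ⟨hzB, hz0⟩

theorem hasRankLE_mom (n r : ℕ) (hn : 0 < n) (t lam : Fin r → ℂ) :
    QIT.HasRankLE (fun m : Fin n → Fin 2 => mom r t lam (∑ i, ((m i : ℕ)))) r := by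
  haveI : NeZero n := ⟨by omega⟩
  refine ⟨fun p i j => (if i = 0 then lam p else 1) * t p ^ (j : ℕ), ?_⟩
  funext m
  simp only [mom, Finset.sum_apply, QIT.prodTensor]
  refine Finset.sum_congr rfl fun p _ => ?_
  rw [Finset.prod_mul_distrib, Finset.prod_pow_eq_pow_sum]
  congr 1
  simp [Finset.prod_ite_eq']

theorem lrec_mem_closure (n r : ℕ) (hn : 0 < n) (t : Fin r → ℂ) (init : ℕ → ℂ) :
    (fun m : Fin n → Fin 2 => lrec r (acoef r t) init (∑ i, ((m i : ℕ))))
      ∈ closure {S : (Fin n → Fin 2) → ℂ | QIT.HasRankLE S r} := by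
  set tp : ℂ → Fin r → ℂ := fun ε p => t p + ε * ((p : ℕ) : ℂ) with htp
  set Bad : Set ℂ := ⋃ p : Fin r, ⋃ q : Fin r,
      if p = q then (∅ : Set ℂ) else {(t q - t p) / (((p:ℕ):ℂ) - ((q:ℕ):ℂ))} with hBad
  have hBadfin : Bad.Finite :=
    Set.finite_iUnion fun p => Set.finite_iUnion fun q => by
      split_ifs
      exacts [Set.finite_empty, Set.finite_singleton _]
  have hinj : ∀ ε, ε ∉ Bad → Function.Injective (tp ε) := by
    intro ε hε p q hpq
    by_contra hne
    have hc : ((p:ℕ):ℂ) ≠ ((q:ℕ):ℂ) := by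
      simp only [Ne, Nat.cast_inj]
      exact fun hh => hne (Fin.ext hh)
    have h2 : ε * (((p:ℕ):ℂ) - ((q:ℕ):ℂ)) = t q - t p := by
      have : t p + ε * ((p:ℕ):ℂ) = t q + ε * ((q:ℕ):ℂ) := hpq
      linear_combination this
    have h3 : ε = (t q - t p) / (((p:ℕ):ℂ) - ((q:ℕ):ℂ)) := by
      rw [eq_div_iff (sub_ne_zero.mpr hc)]
      exact h2
    apply hε
    rw [hBad]
    refine Set.mem_iUnion.mpr ⟨p, Set.mem_iUnion.mpr ⟨q, ?_⟩⟩
    rw [if_neg hne]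
    exact h3
  have hev : ∀ᶠ ε in 𝓝[≠] (0:ℂ), Function.Injective (tp ε) :=
    (ev_notMem hBadfin).mono hinj
  have hc : Continuous fun ε : ℂ =>
      (fun m : Fin n → Fin 2 => lrec r (acoef r (tp ε)) init (∑ i, ((m i : ℕ)))) := by
    apply continuous_pi
    intro m
    apply lrec_continuous init (fun ε => acoef r (tp ε))
    intro j
    exact (cont_acoef j).comp
      (continuous_pi fun p => continuous_const.add (continuous_id.mul continuous_const))
  have h0 : tp 0 = t := by funext p; simp [htp]
  have hten : Tendsto (fun ε : ℂ =>
      (fun m : Fin n → Fin 2 => lrec r (acoef r (tp ε)) init (∑ i, ((m i : ℕ)))))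
      (𝓝[≠] (0:ℂ))
      (𝓝 (fun m : Fin n → Fin 2 => lrec r (acoef r t) init (∑ i, ((m i : ℕ))))) := by
    have := hc.tendsto 0
    rw [h0] at this
    exact this.mono_left nhdsWithin_le_nhds
  apply mem_closure_of_tendsto hten
  filter_upwards [hev] with ε hεinj
  obtain ⟨lam, hlam⟩ := exists_lam (tp ε) hεinj init
  simp only [Set.mem_setOf_eq, hlam]
  exact hasRankLE_mom n r hn (tp ε) lam

theorem wt_le (n : ℕ) (m : Fin n → Fin 2) : (∑ i, ((m i : ℕ))) ≤ n := by
  calc (∑ i, ((m i : ℕ))) ≤ ∑ _i : Fin n, 1 :=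
        Finset.sum_le_sum fun i _ => Nat.lt_succ_iff.mp (m i).isLt
    _ = n := by simp

/-- The Hankel-type matrix of the linear system for recurrence coefficients. -/
def Mmat (r s : ℕ) (c : ℕ → ℂ) : Matrix (Fin s) (Fin s) ℂ :=
  Matrix.of fun k i => c (↑k + (r - s) + ↑i)

theorem det_ne_mem_closure (n r s : ℕ) (hn : 0 < n) (hrs : r + s = n + 1) (hsr : s ≤ r)
    (hs : 0 < s) (c : ℕ → ℂ) (hdet : (Mmat r s c).det ≠ 0) :
    (fun m : Fin n → Fin 2 => c (∑ i, ((m i : ℕ))))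
      ∈ closure {S : (Fin n → Fin 2) → ℂ | QIT.HasRankLE S r} := by
  set u := r - s with hu
  have hus : u + s = r := by omega
  set p' := (Mmat r s c)⁻¹ *ᵥ (fun k : Fin s => c (k + r)) with hp'
  have hsolve : (Mmat r s c) *ᵥ p' = fun k : Fin s => c (k + r) := by
    rw [hp', Matrix.mulVec_mulVec, Matrix.mul_nonsing_inv _ hdet.isUnit, Matrix.one_mulVec]
  set q : Polynomial ℂ := X ^ r + ∑ i : Fin s, C (-(p' i)) * X ^ (u + (i : ℕ)) with hq
  have hdegsum : (∑ i : Fin s, C (-(p' i)) * X ^ (u + (i : ℕ))).degree < (r : WithBot ℕ) := by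
    apply lt_of_le_of_lt (Polynomial.degree_sum_le _ _)
    apply Finset.sup_lt_iff (by exact_mod_cast WithBot.bot_lt_coe r) |>.mpr
    intro i _
    apply lt_of_le_of_lt (degree_C_mul_X_pow_le _ _)
    have hi := i.isLt
    exact_mod_cast show u + (i : ℕ) < r by omega
  have hqmon : q.Monic := monic_X_pow_add hdegsum
  have hqdeg : q.natDegree = r := by
    have : q.degree = r := by
      rw [hq, degree_add_eq_left_of_degree_lt (by rwa [degree_X_pow]), degree_X_pow]
    exact natDegree_eq_of_degree_eq_some this
  have hclow : ∀ j, j < u → q.coeff j = 0 := by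
    intro j hj
    rw [hq, coeff_add, coeff_X_pow, if_neg (by omega), finset_sum_coeff]
    rw [zero_add]
    apply Finset.sum_eq_zero
    intro i _
    rw [coeff_C_mul, coeff_X_pow, if_neg (by omega), mul_zero]
  have hchi : ∀ i : Fin s, q.coeff (u + (i : ℕ)) = -(p' i) := by
    intro i
    rw [hq, coeff_add, coeff_X_pow, if_neg (by have := i.isLt; omega), finset_sum_coeff, zero_add]
    rw [Finset.sum_eq_single i]
    · rw [coeff_C_mul, coeff_X_pow, if_pos rfl, mul_one]
    · intro i' _ hne
      rw [coeff_C_mul, coeff_X_pow, if_neg, mul_zero]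
      intro hh
      exact hne (Fin.ext (by omega))
    · intro h; exact absurd (Finset.mem_univ i) h
  have hsplits : q.Splits := IsAlgClosed.splits q
  have hcard : q.roots.card = r := by
    rw [(splits_iff_card_roots).mp hsplits, hqdeg]
  set l := q.roots.toList with hltl
  have hl : l.length = r := by rw [hltl, Multiset.length_toList, hcard]
  set t : Fin r → ℂ := fun p => l.get (Fin.cast hl.symm p) with ht
  have hprod : (∏ p : Fin r, (X - C (t p))) = q := by
    have h1 : q = (q.roots.map fun a => X - C a).prod :=
      hsplits.eq_prod_roots_of_monic hqmon
    have h2 : q.roots = (l : Multiset ℂ) := (Multiset.coe_toList _).symm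
    rw [h1, h2, Multiset.map_coe, Multiset.prod_coe]
    conv_rhs => rw [← List.ofFn_get l, List.map_ofFn, List.prod_ofFn]
    exact Fintype.prod_equiv (finCongr hl.symm) _ _ fun p => rfl
  have hac : ∀ j : Fin r, acoef r t j = -(q.coeff j) := by
    intro j; rw [acoef, hprod]
  have hrec : ∀ k, r ≤ k → k ≤ n → (∑ j : Fin r, acoef r t j * c (k - r + j)) = c k := by
    intro k hk hkn
    set F : ℕ → ℂ := fun j => -(q.coeff j) * c (k - r + j) with hFdef
    have h1 : (∑ j : Fin r, acoef r t j * c (k - r + j)) = ∑ j ∈ Finset.range r, F j := by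
      rw [← Fin.sum_univ_eq_sum_range F r]
      exact Finset.sum_congr rfl fun j _ => by simp only [hFdef, hac]
    have h2 : ∑ j ∈ Finset.range r, F j
        = ∑ j ∈ Finset.range u, F j + ∑ x ∈ Finset.range s, F (u + x) := by
      rw [← hus, Finset.sum_range_add]
    have hz : ∑ j ∈ Finset.range u, F j = 0 :=
      Finset.sum_eq_zero fun j hj => by
        simp only [hFdef]
        rw [hclow j (Finset.mem_range.mp hj), neg_zero, zero_mul]
    have hrow := congrFun hsolve ⟨k - r, by omega⟩
    simp only [Matrix.mulVec, dotProduct, Mmat, Matrix.of_apply] at hrow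
    have hkr : k - r + r = k := by omega
    have h3 : ∑ x ∈ Finset.range s, F (u + x) = c k := by
      rw [← Fin.sum_univ_eq_sum_range (fun x => F (u + x)) s]
      have hterm : ∀ i : Fin s, F (u + (i : ℕ)) = c (k - r + (r - s) + (i : ℕ)) * p' i := by
        intro i
        simp only [hFdef]
        rw [hchi i, neg_neg, mul_comm]
        congr 2
        omega
      rw [Finset.sum_congr rfl fun i _ => hterm i, hrow, hkr]
    rw [h1, h2, hz, zero_add, h3]
  have hagree : ∀ k, k ≤ n → lrec r (acoef r t) c k = c k := by
    intro k
    induction k using Nat.strong_induction_on with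
    | _ k ih =>
      intro hkn
      by_cases h : k < r
      · exact lrec_lt h
      · rw [lrec_ge h, ← hrec k (by omega) hkn]
        refine Finset.sum_congr rfl fun j _ => ?_
        rw [ih (k - r + j) (by have := j.isLt; omega) (by have := j.isLt; omega)]
  have hmem := lrec_mem_closure n r hn t c
  have heq : (fun m : Fin n → Fin 2 => c (∑ i, ((m i : ℕ))))
      = fun m : Fin n → Fin 2 => lrec r (acoef r t) c (∑ i, ((m i : ℕ))) :=
    funext fun m => (hagree _ (wt_le n m)).symm
  rw [heq]
  exact hmem

/-- The witness sequence used to show genericity of the Hankel condition. -/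
def cstar (s : ℕ) : ℕ → ℂ := fun k => ∑ p : Fin s, (((p : ℕ) + 1 : ℕ) : ℂ) ^ k

theorem det_cstar (r s : ℕ) : (Mmat r s (cstar s)).det ≠ 0 := by
  set u : Fin s → ℂ := fun p => (((p : ℕ) + 1 : ℕ) : ℂ) with hudef
  have huinj : Function.Injective u := by
    intro p q hpq
    simp only [hudef, Nat.cast_inj] at hpq
    exact Fin.ext (by omega)
  have hu0 : ∀ p, u p ≠ 0 := fun p => Nat.cast_ne_zero.mpr (by omega)
  set W := Matrix.vandermonde u with hW
  have hfact : Mmat r s (cstar s) = Wᵀ * (Matrix.diagonal (fun p => u p ^ (r - s)) * W) := by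
    ext k i
    rw [Matrix.mul_apply]
    have hd : ∀ p, (Matrix.diagonal (fun p => u p ^ (r - s)) * W) p i
        = u p ^ (r - s) * W p i := fun p => Matrix.diagonal_mul _ _ p i
    simp only [hd, Matrix.diagonal_mul, hudef, Matrix.transpose_apply, hW, Matrix.vandermonde_apply, Mmat,
      Matrix.of_apply, cstar]
    refine Finset.sum_congr rfl fun p _ => ?_
    rw [pow_add, pow_add]
    ring
  rw [hfact, Matrix.det_mul, Matrix.det_mul, Matrix.det_transpose, Matrix.det_diagonal]
  have hv : W.det ≠ 0 := Matrix.det_vandermonde_ne_zero_iff.mpr huinj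
  exact mul_ne_zero hv
    (mul_ne_zero (Finset.prod_ne_zero_iff.mpr fun p _ => pow_ne_zero _ (hu0 p)) hv)

theorem all_mem_closure (n r s : ℕ) (hn : 0 < n) (hrs : r + s = n + 1) (hsr : s ≤ r)
    (hs : 0 < s) (c : ℕ → ℂ) :
    (fun m : Fin n → Fin 2 => c (∑ i, ((m i : ℕ))))
      ∈ closure {S : (Fin n → Fin 2) → ℂ | QIT.HasRankLE S r} := by
  set d : ℕ → ℂ := fun k => cstar s k - c k with hd
  set N : Matrix (Fin s) (Fin s) (Polynomial ℂ) :=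
    Matrix.of (fun k i : Fin s => C (c (↑k + (r - s) + ↑i)) + X * C (d (↑k + (r - s) + ↑i)))
    with hN
  have hmap : ∀ z : ℂ, Mmat r s (fun k => c k + z * d k) = N.map (Polynomial.evalRingHom z) := by
    intro z
    ext k i
    simp only [Mmat, hN, Matrix.map_apply, Matrix.of_apply, map_add, Polynomial.eval_add,
      Polynomial.eval_mul, Polynomial.eval_C, Polynomial.eval_X, Polynomial.coe_evalRingHom]
  have hdeteq : ∀ z : ℂ, (N.map (⇑(Polynomial.evalRingHom z))).det = Polynomial.eval z N.det := by
    intro z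
    rw [← RingHom.mapMatrix_apply, ← RingHom.map_det]
    rfl
  have hdetN : N.det ≠ 0 := by
    intro hzero
    apply det_cstar r s
    have h1 : Mmat r s (cstar s) = Mmat r s (fun k => c k + 1 * d k) := by
      congr 1
      funext k
      simp [hd]
    rw [h1, hmap 1, hdeteq 1, hzero]
    simp
  have hev : ∀ᶠ z in 𝓝[≠] (0:ℂ), (Mmat r s (fun k => c k + z * d k)).det ≠ 0 := by
    filter_upwards [ev_notMem (N.det.finite_setOf_isRoot hdetN)] with z hz
    rw [hmap z, hdeteq z]
    exact hz
  have hten : Tendsto (fun z : ℂ => (fun m : Fin n → Fin 2 =>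
        (fun k => c k + z * d k) (∑ i, ((m i : ℕ)))))
      (𝓝[≠] (0:ℂ)) (𝓝 (fun m : Fin n → Fin 2 => c (∑ i, ((m i : ℕ))))) := by
    have hcont : Continuous fun z : ℂ => (fun m : Fin n → Fin 2 =>
        c (∑ i, ((m i : ℕ))) + z * d (∑ i, ((m i : ℕ)))) := by
      apply continuous_pi
      intro m
      exact continuous_const.add (continuous_id.mul continuous_const)
    have h0 := hcont.tendsto 0
    simp only [zero_mul, add_zero] at h0
    exact h0.mono_left nhdsWithin_le_nhds
  have hcc : (fun m : Fin n → Fin 2 => c (∑ i, ((m i : ℕ))))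
      ∈ closure (closure {S : (Fin n → Fin 2) → ℂ | QIT.HasRankLE S r}) := by
    apply mem_closure_of_tendsto hten
    filter_upwards [hev] with z hz
    exact det_ne_mem_closure n r s hn hrs hsr hs _ hz
  rwa [closure_closure] at hcc

theorem val_fin2 (v : Fin 2) : (v : ℕ) = if v = 1 then 1 else 0 := by
  fin_cases v <;> simp

theorem card_eq_wt (n : ℕ) (a : Fin n → Fin 2) :
    (Finset.univ.filter fun i => a i = 1).card = ∑ i, ((a i : ℕ)) := by
  rw [Finset.card_filter]
  exact Finset.sum_congr rfl fun i _ => (val_fin2 (a i)).symm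

theorem exists_perm (n : ℕ) (a b : Fin n → Fin 2)
    (h : ∑ i, ((a i : ℕ)) = ∑ i, ((b i : ℕ))) :
    ∃ σ : Equiv.Perm (Fin n), a = b ∘ σ := by
  classical
  set sa := Finset.univ.filter fun i => a i = 1 with hsa
  set sb := Finset.univ.filter fun i => b i = 1 with hsb
  have hcard : sa.card = sb.card := by
    rw [hsa, hsb, card_eq_wt, card_eq_wt, h]
  have hcardc : saᶜ.card = sbᶜ.card := by
    rw [Finset.card_compl, Finset.card_compl, hcard]
  let e : {x // x ∈ sb} ≃ {x // x ∈ sa} := Finset.equivOfCardEq hcard.symm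
  let ec : {x // x ∈ sbᶜ} ≃ {x // x ∈ saᶜ} := Finset.equivOfCardEq hcardc.symm
  let e2 : {x // ¬ x ∈ sb} ≃ {x // ¬ x ∈ sa} :=
    ((Equiv.subtypeEquivRight fun x => (Finset.mem_compl (s := sb)).symm).trans ec).trans
      (Equiv.subtypeEquivRight fun x => Finset.mem_compl (s := sa))
  let σ : Equiv.Perm (Fin n) :=
    ((Equiv.sumCompl (· ∈ sa)).symm.trans (e.symm.sumCongr e2.symm)).trans
      (Equiv.sumCompl (· ∈ sb))
  have key : ∀ i, σ i ∈ sb ↔ i ∈ sa := by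
    intro i
    by_cases hi : i ∈ sa
    · have : σ i = ((e.symm ⟨i, hi⟩ : {x // x ∈ sb}) : Fin n) := by
        simp only [σ, Equiv.trans_apply, Equiv.sumCompl_symm_apply_of_pos hi,
          Equiv.sumCongr_apply, Sum.map_inl, Equiv.sumCompl_apply_inl]
      rw [this]
      simpa using hi
    · have : σ i = ((e2.symm ⟨i, hi⟩ : {x // ¬ x ∈ sb}) : Fin n) := by
        simp only [σ, Equiv.trans_apply, Equiv.sumCompl_symm_apply_of_neg hi,
          Equiv.sumCongr_apply, Sum.map_inr, Equiv.sumCompl_apply_inr]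
      rw [this]
      simp only [hi, iff_false]
      exact (e2.symm ⟨i, hi⟩).2
  refine ⟨σ, funext fun i => ?_⟩
  have h01 : ∀ v : Fin 2, v = 0 ∨ v = 1 := by decide
  by_cases hi : i ∈ sa
  · have h1 : a i = 1 := (Finset.mem_filter.mp hi).2
    have h2 : b (σ i) = 1 := (Finset.mem_filter.mp ((key i).mpr hi)).2
    simp [h1, h2, Function.comp]
  · have h1 : a i ≠ 1 := fun hh => hi (Finset.mem_filter.mpr ⟨Finset.mem_univ _, hh⟩)
    have h2 : b (σ i) ≠ 1 := fun hh => ((key i).mp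
      (Finset.mem_filter.mpr ⟨Finset.mem_univ _, hh⟩)) |> hi
    rcases h01 (a i) with ha | ha
    · rcases h01 (b (σ i)) with hb | hb
      · simp [ha, hb, Function.comp]
      · exact absurd hb h2
    · exact absurd ha h1

end

end BorderRankAux

/-- for `n ≥ 4`, every symmetric `n`-qubit tensor has border rank
at most `⌈(n+1)/2⌉ = (n+2)/2`. -/
theorem symmetric_borderRank_le (n : ℕ) (hn : 4 ≤ n)
    (T : (Fin n → Fin 2) → ℂ)
    (hsym : ∀ (σ : Equiv.Perm (Fin n)) (j : Fin n → Fin 2), T (j ∘ σ) = T j) :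
    borderRank T ≤ (n + 2) / 2 := by
  classical
  set r : ℕ := (n + 2) / 2 with hrdef
  set s : ℕ := n + 1 - r with hsdef
  have hrs : r + s = n + 1 := by omega
  have hsr : s ≤ r := by omega
  have hs : 0 < s := by omega
  have hn0 : 0 < n := by omega
  set c : ℕ → ℂ := fun k => T (fun i => if (i : ℕ) < k then 1 else 0) with hc
  have hT : T = fun m : Fin n → Fin 2 => c (∑ i, ((m i : ℕ))) := by
    funext m
    set w : ℕ := ∑ i, ((m i : ℕ)) with hw
    set a : Fin n → Fin 2 := fun i => if (i : ℕ) < w then 1 else 0 with ha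
    have hwn : w ≤ n := BorderRankAux.wt_le n m
    have hwt : ∑ i, ((a i : ℕ)) = w := by
      have hcast : ∀ i : Fin n, ((a i : ℕ)) = if (i : ℕ) < w then 1 else 0 := by
        intro i
        simp only [ha]
        split_ifs <;> rfl
      rw [Finset.sum_congr rfl fun i _ => hcast i]
      rw [Fin.sum_univ_eq_sum_range (fun j => if j < w then 1 else 0) n]
      rw [← Finset.card_filter]
      have : (Finset.range n).filter (· < w) = Finset.range w := by
        ext j
        simp only [Finset.mem_filter, Finset.mem_range]
        omega
      rw [this, Finset.card_range]
    obtain ⟨σ, hσ⟩ := BorderRankAux.exists_perm n a m (by rw [hwt])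
    have : T a = T m := by
      rw [hσ]
      exact hsym σ m
    rw [← this]
  have hmem : T ∈ closure {S : (Fin n → Fin 2) → ℂ | HasRankLE S r} := by
    rw [hT]
    exact BorderRankAux.all_mem_closure n r s hn0 hrs hsr hs c
  have : borderRank T ≤ r := Nat.sInf_le hmem
  exact this

end QIT
end

section
/- (Substitution method.) Let T ∈ V₁⊗⋯⊗Vₙ be an i-concise tensor. For every proper subspace V_i' ⊊ V_i there exists a linear projection π_i : V_i → V_i' onto V_i' such that rk(T) − rk(π_i T) ≥ dim V_i − dim V_i', where π_i T denotes the application of π_i to the i-th factor of T, i.e., (id^{⊗(i−1)}⊗π_i⊗id^{⊗(n−i)})T. -/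
namespace QIT

private lemma prodTensor_update_apply {ι : Type} [Fintype ι] [DecidableEq ι] {α : ι → Type}
    (v : ∀ i, α i → ℂ) (i : ι) (m : ∀ j, α j) (k : α i) :
    prodTensor v (Function.update m i k) =
      v i k * ∏ j ∈ Finset.univ.erase i, v j (m j) := by
  unfold prodTensor
  rw [← Finset.mul_prod_erase Finset.univ (fun j => v j (Function.update m i k j))
    (Finset.mem_univ i)]
  congr 1
  · rw [Function.update_self]
  · refine Finset.prod_congr rfl fun j hj => ?_
    rw [Function.update_of_ne (Finset.ne_of_mem_erase hj)]

private lemma slice_sum {ι : Type} [Fintype ι] [DecidableEq ι] {α : ι → Type}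
    {r : ℕ} (v : Fin r → ∀ i, α i → ℂ) (i : ι) (m : ∀ j, α j) :
    sliceAt (∑ p, prodTensor (v p)) i m
      = ∑ p, (∏ j ∈ Finset.univ.erase i, v p j (m j)) • v p i := by
  funext k
  simp only [sliceAt, Finset.sum_apply, Pi.smul_apply, smul_eq_mul]
  exact Finset.sum_congr rfl fun p _ => by rw [prodTensor_update_apply]; ring

private lemma exists_hasRankLE {ι : Type} [Fintype ι] [DecidableEq ι] {α : ι → Type}
    [∀ i, Fintype (α i)] (T : (∀ i, α i) → ℂ) (i : ι) :
    ∃ r, HasRankLE T r := by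
  classical
  refine ⟨Fintype.card (∀ j, α j), ?_⟩
  set e := (Fintype.equivFin (∀ j, α j)).symm with he
  refine ⟨fun p j k => if k = e p j then (if j = i then T (e p) else 1) else 0, ?_⟩
  funext m
  have hterm : ∀ p, prodTensor
      (fun j k => if k = e p j then (if j = i then T (e p) else 1) else 0) m
      = if m = e p then T (e p) else 0 := by
    intro p
    by_cases h : m = e p
    · subst h
      rw [if_pos rfl]
      unfold prodTensor
      simp only [eq_self_iff_true, if_true]
      rw [Finset.prod_ite_eq' Finset.univ i (fun _ => T (e p))]
      simp
    · rw [if_neg h]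
      obtain ⟨j0, hj0⟩ := Function.ne_iff.mp h
      exact Finset.prod_eq_zero (Finset.mem_univ j0) (by simp [hj0])
  have h2 : ∀ p, (if m = e p then T (e p) else 0) = if p = e.symm m then T m else 0 := by
    intro p
    by_cases h : p = e.symm m
    · subst h; simp
    · rw [if_neg h, if_neg]
      intro hm
      exact h (by rw [hm]; simp)
  rw [Finset.sum_apply]
  simp only [hterm, h2]
  simp

/-- substitution method: for an `i`-concise tensor `T` and a
proper subspace `V' ⊊ V_i` there is a linear projection `π` of `V_i` onto `V'`
with `rk(T) − rk(π T) ≥ dim V_i − dim V'`. -/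
theorem substitution_method
    {ι : Type} [Fintype ι] [DecidableEq ι] {α : ι → Type} [∀ i, Fintype (α i)]
    (T : (∀ i, α i) → ℂ) (i : ι) (hT : Concise T i)
    (V' : Submodule ℂ (α i → ℂ)) (hV' : V' ≠ ⊤) :
    ∃ π : (α i → ℂ) →ₗ[ℂ] (α i → ℂ),
      LinearMap.range π = V' ∧ (∀ x ∈ V', π x = x) ∧
      tensorRank (applyAtFactor T i π)
          + (Module.finrank ℂ (α i → ℂ) - Module.finrank ℂ V')
        ≤ tensorRank T := by
  classical
  have hex : ∃ r, HasRankLE T r := exists_hasRankLE T i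
  set r := tensorRank T with hrdef
  have hT0 : HasRankLE T r := Nat.sInf_mem hex
  obtain ⟨v, hv⟩ := hT0
  -- the i-th factors of the decomposition span the whole local space
  have hspan : Submodule.span ℂ (Set.range fun p => v p i) = ⊤ := by
    apply hT
    intro m
    rw [hv, slice_sum]
    exact Submodule.sum_mem _ fun p _ =>
      Submodule.smul_mem _ _ (Submodule.subset_span ⟨p, rfl⟩)
  -- a basis of V' as a set
  let bV' := Module.finBasis ℂ V'
  set s : Set (α i → ℂ) := Set.range (fun q => (bV' q : α i → ℂ)) with hs_def
  have hsV' : Submodule.span ℂ s = V' := by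
    rw [hs_def, show (fun q => (bV' q : α i → ℂ)) = (V'.subtype) ∘ bV' from rfl,
      Set.range_comp, Submodule.span_image, Module.Basis.span_eq, Submodule.map_subtype_top]
  have hs_li : LinearIndepOn ℂ id s :=
    (linearIndepOn_id_range_iff (f := fun q => (bV' q : α i → ℂ))
      (Subtype.val_injective.comp bV'.injective)).mpr
      ((bV'.linearIndependent.map' V'.subtype V'.ker_subtype))
  -- extend it to a basis inside s ∪ {v p i}
  have hst : s ⊆ s ∪ Set.range (fun p => v p i) := Set.subset_union_left
  have htop : ⊤ ≤ Submodule.span ℂ (s ∪ Set.range fun p => v p i) :=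
    hspan ▸ Submodule.span_mono Set.subset_union_right
  set ext := hs_li.extend hst with hext_def
  let B : Module.Basis ext ℂ (α i → ℂ) := Module.Basis.extendLe hs_li hst htop
  have hBapp : ∀ x : ext, B x = x := Module.Basis.extendLe_apply_self hs_li hst htop
  have hs_sub : s ⊆ ext := hs_li.subset_extend hst
  have hext_sub : ext ⊆ s ∪ Set.range (fun p => v p i) := hs_li.extend_subset hst
  -- the projection
  set π : (α i → ℂ) →ₗ[ℂ] (α i → ℂ) :=
    B.constr ℂ (fun x : ext => if (x : α i → ℂ) ∈ s then (x : α i → ℂ) else 0) with hπ_def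
  have hπext : ∀ x : ext, π (x : α i → ℂ)
      = if (x : α i → ℂ) ∈ s then (x : α i → ℂ) else 0 := fun x => by
    conv_lhs => rw [← hBapp x]
    exact B.constr_basis ℂ _ x
  have hπs : ∀ x ∈ s, π x = x := fun x hx => by
    have := hπext ⟨x, hs_sub hx⟩
    simpa [hx] using this
  have hπfix : ∀ x ∈ V', π x = x := by
    intro x hx
    rw [← hsV'] at hx
    induction hx using Submodule.span_induction with
    | mem y hy => exact hπs y hy
    | zero => simp
    | add y z _ _ hy hz => rw [map_add, hy, hz]
    | smul a y _ hy => rw [map_smul, hy]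
  have hπrange : LinearMap.range π = V' := by
    apply le_antisymm
    · rw [hπ_def, Module.Basis.constr_range, Submodule.span_le]
      rintro y ⟨x, rfl⟩
      by_cases hx : (x : α i → ℂ) ∈ s
      · simp only [if_pos hx]
        rw [← hsV']
        exact Submodule.subset_span hx
      · simp only [if_neg hx]
        exact V'.zero_mem
    · intro x hx
      exact ⟨x, hπfix x hx⟩
  have hkill : ∀ x ∈ ext, x ∉ s → π x = 0 := fun x hx hxs => by
    have := hπext ⟨x, hx⟩
    simpa [hxs] using this
  -- choose preimages in the decomposition for the complementary basis vectors
  have hchoice : ∀ x : ↥(ext \ s), ∃ p : Fin r, v p i = (x : α i → ℂ) := by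
    rintro ⟨x, hx, hxs⟩
    rcases hext_sub hx with h | h
    · exact absurd h hxs
    · obtain ⟨p, hp⟩ := h
      exact ⟨p, hp⟩
  choose g hg using hchoice
  have hginj : Function.Injective g := fun a b hab => by
    apply Subtype.ext
    rw [← hg a, ← hg b, hab]
  haveI : Fintype ext := FiniteDimensional.fintypeBasisIndex B
  have hextfin : ext.Finite := ext.toFinite
  haveI : Fintype ↥(ext \ s) := (hextfin.diff (t := s)).fintype
  set P : Finset (Fin r) := Finset.univ.image g with hP_def
  have hPcard : P.card = (ext \ s).ncard := by
    rw [hP_def, Finset.card_image_of_injective _ hginj, Finset.card_univ,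
      ← Nat.card_coe_set_eq, Nat.card_eq_fintype_card]
  have hcard_ext : ext.ncard = Module.finrank ℂ (α i → ℂ) := by
    rw [Module.finrank_eq_card_basis B, ← Nat.card_coe_set_eq, Nat.card_eq_fintype_card]
  have hcard_s : s.ncard = Module.finrank ℂ V' := by
    have hinj : Function.Injective (fun q => (bV' q : α i → ℂ)) :=
      Subtype.val_injective.comp bV'.injective
    rw [hs_def, ← Nat.card_coe_set_eq, Nat.card_range_of_injective hinj,
      Nat.card_eq_fintype_card, Fintype.card_fin]
  have hsfin : s.Finite := by rw [hs_def]; exact Set.finite_range _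
  have hdiff : (ext \ s).ncard = Module.finrank ℂ (α i → ℂ) - Module.finrank ℂ V' := by
    rw [Set.ncard_diff hs_sub hsfin, hcard_ext, hcard_s]
  -- the projected tensor as a sum of simple tensors
  have happly : applyAtFactor T i π
      = ∑ p, prodTensor (Function.update (v p) i (π (v p i))) := by
    funext j
    have h1 : sliceAt T i j
        = ∑ p, (∏ j' ∈ Finset.univ.erase i, v p j' (j j')) • v p i := by
      conv_lhs => rw [hv]
      exact slice_sum v i j
    show π (sliceAt T i j) (j i) = _
    rw [h1, map_sum, Finset.sum_apply, Finset.sum_apply]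
    refine Finset.sum_congr rfl fun p _ => ?_
    rw [map_smul, Pi.smul_apply, smul_eq_mul]
    unfold prodTensor
    rw [← Finset.mul_prod_erase Finset.univ
      (fun j' => Function.update (v p) i (π (v p i)) j' (j j')) (Finset.mem_univ i),
      Function.update_self, mul_comm]
    congr 1
    refine Finset.prod_congr rfl fun j' hj' => ?_
    rw [Function.update_of_ne (Finset.ne_of_mem_erase hj')]
  have hzero : ∀ p ∈ P, prodTensor (Function.update (v p) i (π (v p i))) = 0 := by
    intro p hp
    obtain ⟨x, _, hx⟩ := Finset.mem_image.mp hp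
    have h0 : π (v p i) = 0 := by
      rw [← hx, hg x]
      exact hkill _ x.2.1 x.2.2
    funext j
    show prodTensor _ j = 0
    refine Finset.prod_eq_zero (Finset.mem_univ i) ?_
    rw [Function.update_self, h0]
    rfl
  have hsum : applyAtFactor T i π
      = ∑ p ∈ Finset.univ \ P, prodTensor (Function.update (v p) i (π (v p i))) := by
    rw [happly]
    refine (Finset.sum_subset (Finset.sdiff_subset) fun p _ hp => ?_).symm
    exact hzero p (by simpa using hp)
  set Q : Finset (Fin r) := Finset.univ \ P with hQ_def
  have hrankle : HasRankLE (applyAtFactor T i π) Q.card := by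
    refine ⟨fun q => Function.update (v (Q.equivFin.symm q : Fin r)) i
      (π (v (Q.equivFin.symm q : Fin r) i)), ?_⟩
    rw [hsum, ← Finset.sum_coe_sort Q
      (fun p => prodTensor (Function.update (v p) i (π (v p i))))]
    exact (Equiv.sum_comp Q.equivFin.symm
      (fun x : Q => prodTensor (Function.update (v (x : Fin r)) i (π (v (x : Fin r) i))))).symm
  have h1 : tensorRank (applyAtFactor T i π) ≤ Q.card := Nat.sInf_le hrankle
  have h2 : Q.card = r - P.card := by
    rw [hQ_def, Finset.card_sdiff_of_subset (Finset.subset_univ P), Finset.card_univ, Fintype.card_fin]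
  have h3 : P.card ≤ r := by
    calc P.card ≤ Finset.univ.card := Finset.card_le_card (Finset.subset_univ P)
      _ = r := by rw [Finset.card_univ, Fintype.card_fin]
  have h4 : P.card = Module.finrank ℂ (α i → ℂ) - Module.finrank ℂ V' := by
    rw [hPcard, hdiff]
  exact ⟨π, hπrange, hπfix, by omega⟩

end QIT
end

section
/- Let n > 2 and let P ∈ V₁⊗⋯⊗Vₙ be a tensor, with d₁ = dim V₁. The following are equivalent: (1) P is persistent; (2) P is 1-concise and there exists a nonzero vector e ∈ V₁ such that ⟨f|P is persistent for every covector f ∈ V₁^∨ with f(e) ≠ 0; (3) P is 1-concise and there exists a nonzero vector e ∈ V₁ such that ⟨f|P is persistent for every covector f ∈ V₁^∨ with f(e) = 1; (4) for every basis e₀,…,e_{d₁−1} of V₁, in the decomposition P = Σ_{j=0}^{d₁−1} e_j⊗P_j all the tensors P_j ∈ V₂⊗⋯⊗Vₙ are nonzero and at least one of them is persistent. -/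
namespace QIT

noncomputable section AuxLemmas

open Module Submodule

lemma sliceAt_smul' {ι : Type} [DecidableEq ι] {α : ι → Type} (T : (∀ i, α i) → ℂ) (c : ℂ)
    (i : ι) (m : ∀ j, α j) : sliceAt (c • T) i m = c • sliceAt T i m := rfl

lemma concise_smul' {ι : Type} [DecidableEq ι] {α : ι → Type} {T : (∀ i, α i) → ℂ} {c : ℂ}
    (hc : c ≠ 0) {i : ι} (h : Concise T i) : Concise (c • T) i := by
  intro V' hV'
  apply h
  intro m
  have h1 := hV' m
  rw [sliceAt_smul'] at h1
  have h2 := V'.smul_mem c⁻¹ h1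
  rwa [inv_smul_smul₀ hc] at h2

lemma contractFirst_smul' {n : ℕ} {α : Fin (n + 1) → Type} (f : (α 0 → ℂ) →ₗ[ℂ] ℂ)
    (T : (∀ i, α i) → ℂ) (c : ℂ) :
    contractFirst f (c • T) = c • contractFirst f T := by
  funext t
  show f (c • fun k => T (Fin.cons k t)) = _
  rw [map_smul]
  rfl

lemma contractFirst_smul_covector' {n : ℕ} {α : Fin (n + 1) → Type} (f : (α 0 → ℂ) →ₗ[ℂ] ℂ)
    (T : (∀ i, α i) → ℂ) (c : ℂ) :
    contractFirst (c • f) T = c • contractFirst f T := rfl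

lemma persistent_smul' : ∀ {n : ℕ} {α : Fin n → Type} {T : (∀ i, α i) → ℂ} {c : ℂ},
    c ≠ 0 → Persistent T → Persistent (c • T)
  | 0, _, _, _, _, h => h.elim
  | 1, _, _, _, _, h => h.elim
  | 2, _, _, _, hc, h => concise_smul' hc h
  | (_ + 3), _, _, _, hc, h => by
      obtain ⟨h1, S, hS, hf⟩ := h
      refine ⟨concise_smul' hc h1, S, hS, fun f hfS => ?_⟩
      rw [contractFirst_smul']
      exact persistent_smul' hc (hf f hfS)

lemma exists_basis_index' {d : Type} [Fintype d] {W : Type} [AddCommGroup W] [Module ℂ W]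
    [FiniteDimensional ℂ W]
    (hdim : Module.finrank ℂ W = Fintype.card d)
    {s t : Set W} (hs : LinearIndependent ℂ ((↑) : s → W)) (hst : s ⊆ t)
    (ht : ⊤ ≤ Submodule.span ℂ t) :
    ∃ F : Basis d ℂ W, (∀ j, F j ∈ t) ∧ ∀ x ∈ s, ∃ j, F j = x := by
  classical
  let F0 := Basis.extendLe (show LinearIndepOn ℂ id s from hs) hst ht
  haveI : Fintype (LinearIndepOn.extend (show LinearIndepOn ℂ id s from hs) hst) := FiniteDimensional.fintypeBasisIndex F0
  have hcard : Fintype.card (LinearIndepOn.extend (show LinearIndepOn ℂ id s from hs) hst) = Fintype.card d := by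
    rw [← Module.finrank_eq_card_basis F0, hdim]
  let e := Fintype.equivOfCardEq hcard
  refine ⟨F0.reindex e, fun j => ?_, fun x hx => ?_⟩
  · rw [Basis.reindex_apply, Basis.extendLe_apply_self]
    exact LinearIndepOn.extend_subset (show LinearIndepOn ℂ id s from hs) hst (e.symm j).2
  · have hx' : x ∈ LinearIndepOn.extend (show LinearIndepOn ℂ id s from hs) hst := LinearIndepOn.subset_extend (show LinearIndepOn ℂ id s from hs) hst hx
    refine ⟨e ⟨x, hx'⟩, ?_⟩
    rw [Basis.reindex_apply, Equiv.symm_apply_apply, Basis.extendLe_apply_self]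

lemma exists_primal_basis' {d : Type} [Fintype d] (F : Basis d ℂ (Module.Dual ℂ (d → ℂ))) :
    ∃ b : Basis d ℂ (d → ℂ), ∀ j, b.coord j = F j := by
  classical
  refine ⟨F.dualBasis.map (Module.evalEquiv ℂ (d → ℂ)).symm, fun j => ?_⟩
  refine LinearMap.ext fun v => ?_
  rw [Basis.coord_apply, Basis.map_repr]
  simp only [LinearEquiv.trans_apply, LinearEquiv.symm_symm]
  rw [Basis.dualBasis_repr]
  simp [Module.evalEquiv_apply, Module.Dual.eval_apply]

lemma finrank_dual_pi' {d : Type} [Fintype d] :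
    Module.finrank ℂ (Module.Dual ℂ (d → ℂ)) = Fintype.card d := by
  rw [Subspace.dual_finrank_eq, Module.finrank_fintype_fun_eq_card]

variable {m : ℕ} {α : Fin (m + 3) → Type} [∀ i, Fintype (α i)]

/-- the 0-th slice over a truncated multi-index -/
def sliceT (P : (∀ i, α i) → ℂ) (t : ∀ i : Fin (m + 2), α i.succ) : α 0 → ℂ :=
  fun k => P (Fin.cons k t)

lemma update_zero_eq_cons' {n : ℕ} {β : Fin (n + 1) → Type} (mm : ∀ i, β i) (k : β 0) :
    Function.update mm 0 k = Fin.cons k (Fin.tail mm) := by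
  funext i
  refine Fin.cases ?_ (fun j => ?_) i
  · simp
  · rw [Function.update_of_ne (Fin.succ_ne_zero j), Fin.cons_succ]
    rfl

omit [∀ i, Fintype (α i)] in
lemma sliceAt_zero' (P : (∀ i, α i) → ℂ) (mm : ∀ i, α i) :
    sliceAt P 0 mm = sliceT P (Fin.tail mm) := by
  funext k
  rw [sliceAt, update_zero_eq_cons']
  rfl

lemma decomp' (b : Basis (α 0) ℂ (α 0 → ℂ)) (P : (∀ i, α i) → ℂ) (x : ∀ i, α i) :
    P x = ∑ j, b j (x 0) * b.repr (sliceT P (fun i => x i.succ)) j := by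
  have h0 : sliceT P (fun i => x i.succ) (x 0) = P x := by
    show P (Fin.cons (x 0) (Fin.tail x)) = P x
    rw [Fin.cons_self_tail]
  calc P x = sliceT P (fun i => x i.succ) (x 0) := h0.symm
    _ = (∑ j, b.repr (sliceT P (fun i => x i.succ)) j • b j) (x 0) := by
        rw [b.sum_repr]
    _ = ∑ j, b j (x 0) * b.repr (sliceT P (fun i => x i.succ)) j := by
        rw [Finset.sum_apply]
        exact Finset.sum_congr rfl fun j _ => by
          rw [Pi.smul_apply, smul_eq_mul, mul_comm]

lemma decomp_unique' (b : Basis (α 0) ℂ (α 0 → ℂ)) (P : (∀ i, α i) → ℂ)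
    (Q : α 0 → ((∀ i : Fin (m + 2), α i.succ) → ℂ))
    (hQ : ∀ x : ∀ i, α i, P x = ∑ j, b j (x 0) * Q j (fun i => x i.succ))
    (j : α 0) (t : ∀ i : Fin (m + 2), α i.succ) :
    Q j t = b.repr (sliceT P t) j := by
  have h : sliceT P t = ∑ j', Q j' t • b j' := by
    funext k
    rw [Finset.sum_apply]
    have hk := hQ (Fin.cons k t)
    simp only [Fin.cons_zero, Fin.cons_succ] at hk
    rw [sliceT, hk]
    exact Finset.sum_congr rfl fun j' _ => by
      rw [Pi.smul_apply, smul_eq_mul, mul_comm]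
  rw [h, b.repr_sum_self]

lemma contractFirst_coord' (b : Basis (α 0) ℂ (α 0 → ℂ)) (P : (∀ i, α i) → ℂ) (j : α 0) :
    contractFirst (b.coord j) P = fun t => b.repr (sliceT P t) j := by
  funext t
  exact b.coord_apply _ _

/-- (1) → (2) -/
lemma persistent_imp_two (P : (∀ i, α i) → ℂ) (h : Persistent P) :
    Concise P 0 ∧ ∃ e : α 0 → ℂ, e ≠ 0 ∧
      ∀ f : (α 0 → ℂ) →ₗ[ℂ] ℂ, f e ≠ 0 → Persistent (contractFirst f P) := by
  obtain ⟨hC, S, hS, hf⟩ := h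
  obtain ⟨φ, hφ0, hφ⟩ := S.exists_dual_map_eq_bot_of_lt_top (lt_top_iff_ne_top.mpr hS)
    inferInstance
  refine ⟨hC, (Module.evalEquiv ℂ (α 0 → ℂ)).symm φ, ?_, fun f hfe => ?_⟩
  · intro h0
    exact hφ0 (by rwa [LinearEquiv.map_eq_zero_iff] at h0)
  · apply hf
    intro hfS
    apply hfe
    have hf0 : φ f = 0 := by
      have hm := Submodule.mem_map_of_mem (f := φ) hfS
      rw [hφ] at hm
      simpa using hm
    rw [Module.apply_evalEquiv_symm_apply, hf0]

/-- (3) → (1) -/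
lemma three_imp_persistent (P : (∀ i, α i) → ℂ) (hC : Concise P 0) (e : α 0 → ℂ)
    (he : e ≠ 0)
    (h : ∀ f : (α 0 → ℂ) →ₗ[ℂ] ℂ, f e = 1 → Persistent (contractFirst f P)) :
    Persistent P := by
  refine ⟨hC, LinearMap.ker (Module.Dual.eval ℂ (α 0 → ℂ) e), ?_, fun f hf => ?_⟩
  · intro htop
    obtain ⟨g, hg⟩ : ∃ g : (α 0 → ℂ) →ₗ[ℂ] ℂ, g e ≠ 0 := by
      by_contra hall
      push_neg at hall
      exact he ((Module.forall_dual_apply_eq_zero_iff ℂ e).mp hall)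
    have hmem : g ∈ LinearMap.ker (Module.Dual.eval ℂ (α 0 → ℂ) e) :=
      htop ▸ Submodule.mem_top
    exact hg (by simpa using hmem)
  · have hfe : f e ≠ 0 := by
      intro h0
      exact hf (by simpa [LinearMap.mem_ker] using h0)
    have hp := h ((f e)⁻¹ • f) (by simp [inv_mul_cancel₀ hfe])
    have h2 := persistent_smul' (c := f e) hfe hp
    rw [contractFirst_smul_covector'] at h2
    rwa [smul_smul, mul_inv_cancel₀ hfe, one_smul] at h2

/-- (1) → (4) -/
lemma persistent_imp_four (P : (∀ i, α i) → ℂ) (h : Persistent P)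
    (b : Basis (α 0) ℂ (α 0 → ℂ)) (Q : α 0 → ((∀ i : Fin (m + 2), α i.succ) → ℂ))
    (hQ : ∀ x : ∀ i, α i, P x = ∑ j, b j (x 0) * Q j (fun i => x i.succ)) :
    (∀ j, Q j ≠ 0) ∧ ∃ j, Persistent (Q j) := by
  obtain ⟨hC, S, hS, hf⟩ := h
  have hQ' : ∀ j t, Q j t = b.repr (sliceT P t) j := decomp_unique' b P Q hQ
  constructor
  · intro j hj0
    have hFI : FactorIn P 0 (LinearMap.ker (b.coord j)) := by
      intro mm
      rw [LinearMap.mem_ker, sliceAt_zero', b.coord_apply]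
      have ht := hQ' j (Fin.tail mm)
      rw [hj0] at ht
      simpa using ht.symm
    have htop := hC _ hFI
    have hbj : b j ∈ LinearMap.ker (b.coord j) := htop ▸ Submodule.mem_top
    rw [LinearMap.mem_ker, b.coord_apply, b.repr_self] at hbj
    simpa using hbj
  · have hex : ∃ j, b.coord j ∉ S := by
      by_contra hall
      push_neg at hall
      apply hS
      rw [eq_top_iff]
      intro f _
      have hf_eq : f = ∑ j, f (b j) • b.coord j := by
        refine b.ext fun i => ?_
        rw [LinearMap.sum_apply]
        classical
        simp [Basis.coord_apply, Basis.repr_self, Finsupp.single_apply, mul_comm]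
      rw [hf_eq]
      exact Submodule.sum_mem _ fun j _ => Submodule.smul_mem _ _ (hall j)
    obtain ⟨j, hj⟩ := hex
    refine ⟨j, ?_⟩
    have hp := hf _ hj
    rw [contractFirst_coord'] at hp
    have : Q j = fun t => b.repr (sliceT P t) j := funext fun t => hQ' j t
    rwa [this]

/-- (4) → (1) -/
lemma four_imp_persistent (P : (∀ i, α i) → ℂ)
    (H : ∀ (b : Basis (α 0) ℂ (α 0 → ℂ)) (Q : α 0 → ((∀ i : Fin (m + 2), α i.succ) → ℂ)),
        (∀ x : ∀ i, α i, P x = ∑ j, b j (x 0) * Q j (fun i => x i.succ)) →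
        ((∀ j, Q j ≠ 0) ∧ ∃ j, Persistent (Q j))) :
    Persistent P := by
  classical
  by_cases hα : Nonempty (α 0)
  swap
  · haveI : IsEmpty (α 0) := not_nonempty_iff.mp hα
    haveI : Subsingleton (α 0 → ℂ) := ⟨fun a b => funext fun x => isEmptyElim x⟩
    have hcontra := H (Basis.empty _) (fun j => isEmptyElim j) (fun x => isEmptyElim (x 0))
    obtain ⟨j, -⟩ := hcontra.2
    exact isEmptyElim j
  have hC : Concise P 0 := by
    intro V' hFI
    by_contra hne
    obtain ⟨g, hg0, hg⟩ := V'.exists_dual_map_eq_bot_of_lt_top (lt_top_iff_ne_top.mpr hne)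
      inferInstance
    obtain ⟨F, -, hFg⟩ := exists_basis_index' finrank_dual_pi'
      ((linearIndepOn_singleton_iff (R := ℂ) (v := id)).mpr hg0) (Set.subset_univ _)
      (le_of_eq Submodule.span_univ.symm)
    obtain ⟨j₀, hj₀⟩ := hFg g rfl
    obtain ⟨b, hb⟩ := exists_primal_basis' F
    obtain ⟨hQne, -⟩ := H b (fun j t => b.repr (sliceT P t) j) (decomp' b P)
    apply hQne j₀
    funext t
    have hmem : sliceT P t ∈ V' := by
      obtain ⟨k₀⟩ := hα
      have hs := hFI (Fin.cons k₀ t)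
      rwa [sliceAt_zero', Fin.tail_cons] at hs
    have hg0' : g (sliceT P t) = 0 := by
      have hm := Submodule.mem_map_of_mem (f := g) hmem
      rw [hg] at hm
      simpa using hm
    show b.repr (sliceT P t) j₀ = 0
    rw [← b.coord_apply, hb j₀, hj₀, hg0']
  set N := {f : (α 0 → ℂ) →ₗ[ℂ] ℂ | ¬ Persistent (contractFirst f P)} with hN
  have hspan : Submodule.span ℂ N ≠ ⊤ := by
    intro htop
    obtain ⟨F, hFN, -⟩ := exists_basis_index' finrank_dual_pi'
      (linearIndependent_empty ℂ _) (Set.empty_subset N) htop.ge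
    obtain ⟨b, hb⟩ := exists_primal_basis' F
    obtain ⟨-, j, hPj⟩ := H b (fun j t => b.repr (sliceT P t) j) (decomp' b P)
    apply hFN j
    rw [← hb j, contractFirst_coord']
    exact hPj
  refine ⟨hC, Submodule.span ℂ N, hspan, fun f hfS => ?_⟩
  by_contra hnp
  exact hfS (Submodule.subset_span hnp)

end AuxLemmas

/-- equivalent characterizations of persistence for an
`n`-partite tensor with `n = m + 3 > 2`. -/
theorem persistent_characterizations
    {m : ℕ} {α : Fin (m + 3) → Type} [∀ i, Fintype (α i)]
    (P : (∀ i, α i) → ℂ) :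
    (Persistent P ↔
      (Concise P 0 ∧ ∃ e : α 0 → ℂ, e ≠ 0 ∧
        ∀ f : (α 0 → ℂ) →ₗ[ℂ] ℂ, f e ≠ 0 → Persistent (contractFirst f P))) ∧
    (Persistent P ↔
      (Concise P 0 ∧ ∃ e : α 0 → ℂ, e ≠ 0 ∧
        ∀ f : (α 0 → ℂ) →ₗ[ℂ] ℂ, f e = 1 → Persistent (contractFirst f P))) ∧
    (Persistent P ↔
      (∀ (b : Module.Basis (α 0) ℂ (α 0 → ℂ)) (Q : α 0 → ((∀ i : Fin (m + 2), α i.succ) → ℂ)),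
        (∀ x : ∀ i, α i, P x = ∑ j, b j (x 0) * Q j (fun i => x i.succ)) →
        ((∀ j, Q j ≠ 0) ∧ ∃ j, Persistent (Q j)))) := by
  refine ⟨⟨persistent_imp_two P, ?_⟩, ⟨?_, ?_⟩, persistent_imp_four P, four_imp_persistent P⟩
  · rintro ⟨hC, e, he, h⟩
    exact three_imp_persistent P hC e he fun f hf => h f (by rw [hf]; exact one_ne_zero)
  · intro h
    obtain ⟨hC, e, he, h2⟩ := persistent_imp_two P h
    exact ⟨hC, e, he, fun f hf => h2 f (by rw [hf]; exact one_ne_zero)⟩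
  · rintro ⟨hC, e, he, h⟩
    exact three_imp_persistent P hC e he h

end QIT
end
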